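/- arXiv:1709.06650 — 2 statements merged into one kernel-verified Lean document; each statement's English description precedes it below -/
import Mathlib

section
/- Let G be a graph on vertex set {1,...,n} with maximum degree Δ. Then every QTF f : {-1,1}^n → {-1,1} supported on G satisfies I[f] ≤ √(Δ + 1) · √n. -/
open Finset
open scoped Classical

noncomputable section

/-- The Boolean cube `{-1,1}^V` as a finset of functions `V → ℤ`. -/
def cube (V : Type*) [Fintype V] [DecidableEq V] : Finset (V → ℤ) :=
  Fintype.piFinset fun _ => ({-1, 1} : Finset ℤ)

/-- Negate the `i`-th coordinate. -/
def flipAt {V : Type*} [DecidableEq V] (x : V → ℤ) (i : V) : V → ℤ :=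
  Function.update x i (-(x i))

/-- Influence of coordinate `i` on `f`: the probability over a uniform point of the cube
that flipping coordinate `i` changes the value of `f`. -/
def coordInf {V : Type*} [Fintype V] [DecidableEq V] {α : Type*} (f : (V → ℤ) → α) (i : V) : ℝ :=
  (∑ x ∈ cube V, if f x ≠ f (flipAt x i) then (1 : ℝ) else 0) / (cube V).card

/-- Total influence of `f`. -/
def totalInf {V : Type*} [Fintype V] [DecidableEq V] {α : Type*} (f : (V → ℤ) → α) : ℝ :=
  ∑ i : V, coordInf f i

/-- Sign function, with `sgn 0 = 0`. -/
def sgn (t : ℝ) : ℤ := if 0 < t then 1 else if t < 0 then -1 else 0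

/-- A quadratic multilinear polynomial `∑_{i<j} a_{ij} x_i x_j + ∑_i b_i x_i + c`. -/
def quadPoly {V : Type*} [Fintype V] [LinearOrder V] (a : V → V → ℝ) (b : V → ℝ) (c : ℝ)
    (x : V → ℤ) : ℝ :=
  (∑ i : V, ∑ j : V, if i < j then a i j * x i * x j else 0) + (∑ i : V, b i * x i) + c

/-- `f` is a QTF supported on the graph `G`: it has a quadratic representation whose
cross terms only involve edges of `G`, and whose polynomial is nonvanishing on the cube. -/
def IsQTFSupportedOn {V : Type*} [Fintype V] [LinearOrder V] (G : SimpleGraph V)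
    (f : (V → ℤ) → ℤ) : Prop :=
  ∃ a b c, (∀ i j : V, i < j → a i j ≠ 0 → G.Adj i j) ∧
    (∀ x ∈ cube V, quadPoly a b c x ≠ 0) ∧
    (∀ x ∈ cube V, f x = sgn (quadPoly a b c x))

variable {n : ℕ}

lemma mem_cube_iff {x : Fin n → ℤ} : x ∈ cube (Fin n) ↔ ∀ i, x i = -1 ∨ x i = 1 := by
  simp [cube, Fintype.mem_piFinset]

lemma flipAt_apply (x : Fin n → ℤ) (i k : Fin n) :
    flipAt x i k = if k = i then -(x i) else x k := by
  simp [flipAt, Function.update]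

lemma flipAt_mem_cube {x : Fin n → ℤ} (hx : x ∈ cube (Fin n)) (i : Fin n) :
    flipAt x i ∈ cube (Fin n) := by
  rw [mem_cube_iff] at hx ⊢
  intro k
  rw [flipAt_apply]
  split_ifs
  · rcases hx i with h | h <;> simp [h]
  · exact hx k

lemma flipAt_flipAt (x : Fin n → ℤ) (i : Fin n) : flipAt (flipAt x i) i = x := by
  funext k
  simp only [flipAt_apply]
  split_ifs with h
  · subst h; simp
  · rfl

lemma flipAt_ne {x : Fin n → ℤ} (hx : x ∈ cube (Fin n)) (i : Fin n) : flipAt x i ≠ x := by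
  intro h
  have := congrFun h i
  rw [flipAt_apply, if_pos rfl] at this
  rcases mem_cube_iff.1 hx i with h' | h' <;> omega

def Acoef (a : Fin n → Fin n → ℝ) (i j : Fin n) : ℝ :=
  if i < j then a i j else if j < i then a j i else 0

def dI (a : Fin n → Fin n → ℝ) (b : Fin n → ℝ) (i : Fin n) (x : Fin n → ℤ) : ℝ :=
  b i + ∑ j, Acoef a i j * x j

lemma dI_flipAt {a : Fin n → Fin n → ℝ} {b : Fin n → ℝ} {i j : Fin n}
    (hA : Acoef a i j = 0) (x : Fin n → ℤ) :
    dI a b i (flipAt x j) = dI a b i x := by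
  unfold dI
  congr 1
  refine Finset.sum_congr rfl fun k _ => ?_
  rw [flipAt_apply]
  split_ifs with h
  · subst h; rw [hA]; ring
  · rfl

lemma Acoef_self (a : Fin n → Fin n → ℝ) (i : Fin n) : Acoef a i i = 0 := by
  simp [Acoef]

lemma quadPoly_flipAt (a : Fin n → Fin n → ℝ) (b : Fin n → ℝ) (c : ℝ) (x : Fin n → ℤ)
    (i : Fin n) :
    quadPoly a b c (flipAt x i) = quadPoly a b c x - 2 * (x i : ℝ) * dI a b i x := by
  unfold quadPoly dI
  have hy : ∀ k, ((flipAt x i k : ℤ) : ℝ) = if k = i then -(x i : ℝ) else (x k : ℝ) := by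
    intro k; rw [flipAt_apply]; split_ifs <;> push_cast <;> ring
  -- linear part
  have hlin : (∑ k, b k * ((flipAt x i k : ℤ) : ℝ)) =
      (∑ k, b k * (x k : ℝ)) + ∑ k, (if k = i then -2 * (x i : ℝ) * b i else 0) := by
    rw [← Finset.sum_add_distrib]
    refine Finset.sum_congr rfl fun k _ => ?_
    rw [hy]
    split_ifs with h
    · subst h; ring
    · ring
  -- quadratic part
  have hquad : (∑ i' : Fin n, ∑ j' : Fin n,
        if i' < j' then a i' j' * ((flipAt x i i' : ℤ) : ℝ) * ((flipAt x i j' : ℤ) : ℝ) else 0) =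
      (∑ i' : Fin n, ∑ j' : Fin n, if i' < j' then a i' j' * (x i' : ℝ) * (x j' : ℝ) else 0)
      + ((∑ j' : Fin n, ∑ i' : Fin n, if i' = i then
            (if i < j' then -2 * (x i : ℝ) * (a i j' * (x j' : ℝ)) else 0) else 0)
        + (∑ i' : Fin n, ∑ j' : Fin n, if j' = i then
            (if i' < i then -2 * (x i : ℝ) * (a i' i * (x i' : ℝ)) else 0) else 0)) := by
    rw [Finset.sum_comm (f := fun (j' i' : Fin n) => if i' = i then
          (if i < j' then -2 * (x i : ℝ) * (a i j' * (x j' : ℝ)) else 0) else 0)]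
    rw [← Finset.sum_add_distrib, ← Finset.sum_add_distrib]
    refine Finset.sum_congr rfl fun i' _ => ?_
    rw [← Finset.sum_add_distrib, ← Finset.sum_add_distrib]
    refine Finset.sum_congr rfl fun j' _ => ?_
    rw [hy, hy]
    by_cases hi' : i' = i
    · subst hi'
      by_cases hj' : j' = i'
      · subst hj'; simp
      · simp only [if_pos rfl, if_neg hj']
        split_ifs with h <;> ring
    · by_cases hj' : j' = i
      · subst hj'
        simp only [if_neg hi', if_pos rfl]
        split_ifs with h <;> ring
      · simp only [if_neg hi', if_neg hj']
        split_ifs <;> ring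
  rw [hquad, hlin]
  simp only [Finset.sum_ite_eq', Finset.mem_univ, if_true]
  have hsum : (∑ j' : Fin n, if i < j' then -2 * (x i : ℝ) * (a i j' * (x j' : ℝ)) else 0)
      + (∑ i' : Fin n, if i' < i then -2 * (x i : ℝ) * (a i' i * (x i' : ℝ)) else 0)
      = -2 * (x i : ℝ) * (∑ j, Acoef a i j * (x j : ℝ)) := by
    rw [Finset.mul_sum, ← Finset.sum_add_distrib]
    refine Finset.sum_congr rfl fun j _ => ?_
    unfold Acoef
    rcases lt_trichotomy i j with h | h | h
    · simp only [if_pos h, if_neg (asymm h)]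
      ring
    · subst h; simp
    · simp only [if_neg (asymm h), if_neg (lt_irrefl _), if_pos h]
      ring
  linarith [hsum]

lemma sgn_of_pos {t : ℝ} (h : 0 < t) : sgn t = 1 := by simp [sgn, h]

lemma sgn_of_neg {t : ℝ} (h : t < 0) : sgn t = -1 := by
  simp [sgn, h, asymm h]

lemma abs_sgn_le (t : ℝ) : |(sgn t : ℝ)| ≤ 1 := by
  unfold sgn; split_ifs <;> norm_num

lemma key_sign {p q d xi : ℝ} (hxi : xi = -1 ∨ xi = 1) (hp : p ≠ 0) (hq : q ≠ 0)
    (hne : sgn p ≠ sgn q) (hpq : q = p - 2 * xi * d) :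
    (sgn p : ℝ) * xi * (sgn d : ℝ) = 1 ∧ sgn q = -(sgn p) := by
  rcases hp.lt_or_gt with hp' | hp'
  · have hq' : 0 < q := by
      rcases hq.lt_or_gt with h | h
      · exact absurd (by rw [sgn_of_neg h, sgn_of_neg hp']) hne
      · exact h
    have hd : 2 * xi * d < 0 := by linarith
    rw [sgn_of_neg hp', sgn_of_pos hq']
    rcases hxi with h | h <;> subst h
    · have : 0 < d := by nlinarith
      rw [sgn_of_pos this]; norm_num
    · have : d < 0 := by nlinarith
      rw [sgn_of_neg this]; norm_num
  · have hq' : q < 0 := by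
      rcases hq.lt_or_gt with h | h
      · exact h
      · exact absurd (by rw [sgn_of_pos h, sgn_of_pos hp']) hne
    have hd : 0 < 2 * xi * d := by linarith
    rw [sgn_of_pos hp', sgn_of_neg hq']
    rcases hxi with h | h <;> subst h
    · have : d < 0 := by nlinarith
      rw [sgn_of_neg this]; norm_num
    · have : 0 < d := by nlinarith
      rw [sgn_of_pos this]; norm_num

lemma inf_identity (a : Fin n → Fin n → ℝ) (b : Fin n → ℝ) (c : ℝ)
    (f : (Fin n → ℤ) → ℤ)
    (hnz : ∀ x ∈ cube (Fin n), quadPoly a b c x ≠ 0)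
    (hrep : ∀ x ∈ cube (Fin n), f x = sgn (quadPoly a b c x)) (i : Fin n) :
    (∑ x ∈ cube (Fin n), if f x ≠ f (flipAt x i) then (1 : ℝ) else 0)
    = ∑ x ∈ cube (Fin n), (f x : ℝ) * (x i : ℝ) * (sgn (dI a b i x) : ℝ) := by
  rw [← sub_eq_zero, ← Finset.sum_sub_distrib]
  refine Finset.sum_involution (fun x _ => flipAt x i) ?_ ?_ (fun x hx => flipAt_mem_cube hx i)
    (fun x _ => flipAt_flipAt x i)
  · intro x hx
    have hmem := flipAt_mem_cube hx i
    have hff : flipAt (flipAt x i) i = x := flipAt_flipAt x i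
    have hdrep2 : dI a b i (flipAt x i) = dI a b i x := dI_flipAt (Acoef_self a i) x
    have hxi : ((flipAt x i i : ℤ) : ℝ) = -((x i : ℤ) : ℝ) := by
      rw [flipAt_apply]; simp
    by_cases hfx : f x = f (flipAt x i)
    · rw [hff]
      simp only [hfx, ne_eq, not_true_eq_false, if_false, hdrep2, hxi]
      ring
    · rw [hff]
      have h1 : (if f x ≠ f (flipAt x i) then (1:ℝ) else 0) = 1 := if_pos hfx
      have h2 : (if f (flipAt x i) ≠ f x then (1:ℝ) else 0) = 1 := if_pos (Ne.symm hfx)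
      rw [h1, h2, hdrep2, hxi]
      have hp := hnz x hx
      have hq := hnz _ hmem
      have hfp := hrep x hx
      have hfq := hrep _ hmem
      have hne : sgn (quadPoly a b c x) ≠ sgn (quadPoly a b c (flipAt x i)) := by
        rw [← hfp, ← hfq]; exact hfx
      have hxival : ((x i : ℤ) : ℝ) = -1 ∨ ((x i : ℤ) : ℝ) = 1 := by
        rcases mem_cube_iff.1 hx i with h | h <;> simp [h]
      obtain ⟨hk1, hk2⟩ := key_sign hxival hp hq hne (quadPoly_flipAt a b c x i)
      rw [hfp, hfq, hk2]
      push_cast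
      push_cast at hk1
      nlinarith [hk1]
  · exact fun x hx _ => flipAt_ne hx i

lemma ortho (a : Fin n → Fin n → ℝ) (b : Fin n → ℝ) {i j : Fin n} (hij : i ≠ j)
    (hAji : Acoef a j i = 0) :
    ∑ x ∈ cube (Fin n),
      (x i : ℝ) * (x j : ℝ) * (sgn (dI a b i x) : ℝ) * (sgn (dI a b j x) : ℝ) = 0 := by
  refine Finset.sum_involution (fun x _ => flipAt x i) ?_
    (fun x hx _ => flipAt_ne hx i) (fun x hx => flipAt_mem_cube hx i)
    (fun x _ => flipAt_flipAt x i)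
  intro x hx
  have h1 : ((flipAt x i i : ℤ) : ℝ) = -((x i : ℤ) : ℝ) := by rw [flipAt_apply]; simp
  have h2 : flipAt x i j = x j := by rw [flipAt_apply, if_neg hij.symm]
  have h3 : dI a b i (flipAt x i) = dI a b i x := dI_flipAt (Acoef_self a i) x
  have h4 : dI a b j (flipAt x i) = dI a b j x := dI_flipAt hAji x
  beta_reduce
  rw [h1, h2, h3, h4]
  ring

lemma abs_coord {x : Fin n → ℤ} (hx : x ∈ cube (Fin n)) (i : Fin n) : |((x i : ℤ) : ℝ)| = 1 := by
  rcases mem_cube_iff.1 hx i with h | h <;> simp [h]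

def Tfun (a : Fin n → Fin n → ℝ) (b : Fin n → ℝ) (x : Fin n → ℤ) : ℝ :=
  ∑ i, (x i : ℝ) * (sgn (dI a b i x) : ℝ)

/-- Every QTF supported on a graph with maximum degree `Δ` satisfies
`I[f] ≤ √(Δ+1) · √n`. -/
theorem qtf_influence_maxDegree {n : ℕ} (G : SimpleGraph (Fin n)) [DecidableRel G.Adj]
    (f : (Fin n → ℤ) → ℤ) (hf : IsQTFSupportedOn G f) :
    totalInf f ≤ Real.sqrt ((G.maxDegree : ℝ) + 1) * Real.sqrt n := by
  have hinst : (fun a b => @LinearOrder.toDecidableEq (Fin n) _ a b : DecidableEq (Fin n)) = instDecidableEqFin n :=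
    Subsingleton.elim _ _
  unfold IsQTFSupportedOn at hf
  rw [hinst] at hf
  obtain ⟨a, b, c, hadj, hnz, hrep⟩ := hf
  have hone : (fun _ => (1:ℤ)) ∈ cube (Fin n) := mem_cube_iff.2 fun i => Or.inr rfl
  have hNpos : (0:ℝ) < ((cube (Fin n)).card : ℝ) := by
    exact_mod_cast Finset.card_pos.2 ⟨_, hone⟩
  set N : ℝ := ((cube (Fin n)).card : ℝ) with hN
  -- Step A: totalInf as a correlation
  have hA : totalInf f = (∑ x ∈ cube (Fin n), (f x : ℝ) * Tfun a b x) / N := by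
    unfold totalInf coordInf
    rw [← Finset.sum_div]
    congr 1
    have step : (∑ i : Fin n, ∑ x ∈ cube (Fin n), if f x ≠ f (flipAt x i) then (1:ℝ) else 0)
        = ∑ i : Fin n, ∑ x ∈ cube (Fin n), (f x : ℝ) * (x i : ℝ) * (sgn (dI a b i x) : ℝ) :=
      Finset.sum_congr rfl fun i _ => inf_identity a b c f hnz hrep i
    have step2 : (∑ x ∈ cube (Fin n), ∑ i : Fin n, (f x : ℝ) * (x i : ℝ) * (sgn (dI a b i x) : ℝ))
        = ∑ x ∈ cube (Fin n), (f x : ℝ) * Tfun a b x :=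
      Finset.sum_congr rfl fun x _ => by
        unfold Tfun
        rw [Finset.mul_sum]
        exact Finset.sum_congr rfl fun i _ => by ring
    have main := step.trans (Finset.sum_comm.trans step2)
    convert main using 2
    refine Finset.sum_congr rfl fun x _ => ?_
    congr!
  -- Step B: bound by absolute value
  have hB : (∑ x ∈ cube (Fin n), (f x : ℝ) * Tfun a b x) ≤ ∑ x ∈ cube (Fin n), |Tfun a b x| := by
    refine Finset.sum_le_sum fun x hx => ?_
    have habs : |(f x : ℝ)| = 1 := by
      rw [hrep x hx]
      rcases (hnz x hx).lt_or_gt with h | h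
      · rw [sgn_of_neg h]; norm_num
      · rw [sgn_of_pos h]; norm_num
    calc (f x : ℝ) * Tfun a b x ≤ |(f x : ℝ) * Tfun a b x| := le_abs_self _
      _ = |(f x : ℝ)| * |Tfun a b x| := abs_mul _ _
      _ = |Tfun a b x| := by rw [habs, one_mul]
  -- Step D: second moment bound
  have hD : (∑ x ∈ cube (Fin n), (Tfun a b x) ^ 2) ≤ (n : ℝ) * ((G.maxDegree + 1) * N) := by
    have hexp : (∑ x ∈ cube (Fin n), (Tfun a b x) ^ 2)
        = ∑ i : Fin n, ∑ j : Fin n, ∑ x ∈ cube (Fin n),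
            (x i : ℝ) * (x j : ℝ) * (sgn (dI a b i x) : ℝ) * (sgn (dI a b j x) : ℝ) := by
      have : ∀ x, (Tfun a b x) ^ 2 = ∑ i : Fin n, ∑ j : Fin n,
          (x i : ℝ) * (x j : ℝ) * (sgn (dI a b i x) : ℝ) * (sgn (dI a b j x) : ℝ) := by
        intro x
        rw [sq]
        unfold Tfun
        rw [Finset.sum_mul_sum]
        exact Finset.sum_congr rfl fun i _ => Finset.sum_congr rfl fun j _ => by ring
      rw [Finset.sum_congr rfl fun x _ => this x, Finset.sum_comm]
      exact Finset.sum_congr rfl fun i _ => Finset.sum_comm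
    rw [hexp]
    have hterm : ∀ i j : Fin n,
        (∑ x ∈ cube (Fin n),
          (x i : ℝ) * (x j : ℝ) * (sgn (dI a b i x) : ℝ) * (sgn (dI a b j x) : ℝ))
        ≤ (if i = j ∨ G.Adj i j then N else 0) := by
      intro i j
      by_cases h : i = j ∨ G.Adj i j
      · rw [if_pos h, hN]
        calc _ ≤ ∑ _x ∈ cube (Fin n), (1:ℝ) := by
              refine Finset.sum_le_sum fun x hx => ?_
              have h1 := abs_coord hx i
              have h2 := abs_coord hx j
              have h3 := abs_sgn_le (dI a b i x)
              have h4 := abs_sgn_le (dI a b j x)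
              calc _ ≤ |(x i : ℝ) * (x j : ℝ) * (sgn (dI a b i x) : ℝ) * (sgn (dI a b j x) : ℝ)| :=
                    le_abs_self _
                _ = |(x i : ℝ)| * |(x j : ℝ)| * |(sgn (dI a b i x) : ℝ)| * |(sgn (dI a b j x) : ℝ)| := by
                    rw [abs_mul, abs_mul, abs_mul]
                _ ≤ 1 := by rw [h1, h2]; nlinarith [abs_nonneg ((sgn (dI a b i x) : ℝ)), abs_nonneg ((sgn (dI a b j x) : ℝ))]
          _ = ((cube (Fin n)).card : ℝ) := by rw [Finset.sum_const, nsmul_eq_mul, mul_one]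
      · push_neg at h
        obtain ⟨hne, hnadj⟩ := h
        rw [if_neg (by push_neg; exact ⟨hne, hnadj⟩)]
        have hAji : Acoef a j i = 0 := by
          unfold Acoef
          split_ifs with h1 h2
          · by_contra h0
            exact hnadj ((hadj j i h1 h0).symm)
          · by_contra h0
            exact hnadj (hadj i j h2 h0)
          · rfl
        exact le_of_eq (ortho a b hne hAji)
    calc _ ≤ ∑ i : Fin n, ∑ j : Fin n, (if i = j ∨ G.Adj i j then N else 0) :=
          Finset.sum_le_sum fun i _ => Finset.sum_le_sum fun j _ => hterm i j
      _ ≤ ∑ _i : Fin n, ((G.maxDegree + 1) * N) := by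
          refine Finset.sum_le_sum fun i _ => ?_
          calc (∑ j : Fin n, if i = j ∨ G.Adj i j then N else 0)
              ≤ ∑ j : Fin n, ((if i = j then N else 0) + (if G.Adj i j then N else 0)) := by
                refine Finset.sum_le_sum fun j _ => ?_
                split_ifs <;> first | linarith | tauto
            _ = N + (G.degree i : ℝ) * N := by
                rw [Finset.sum_add_distrib, Finset.sum_ite_eq, if_pos (Finset.mem_univ i),
                  Finset.sum_ite, Finset.sum_const, Finset.sum_const_zero, add_zero,
                  nsmul_eq_mul]
                congr 2
                simp [SimpleGraph.degree, SimpleGraph.neighborFinset_eq_filter]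
            _ ≤ (G.maxDegree + 1) * N := by
                have := G.degree_le_maxDegree i
                have hdeg : (G.degree i : ℝ) ≤ (G.maxDegree : ℝ) := by exact_mod_cast this
                nlinarith [hNpos.le]
      _ = (n : ℝ) * ((G.maxDegree + 1) * N) := by
          rw [Finset.sum_const, nsmul_eq_mul, Finset.card_univ, Fintype.card_fin]
  -- Step C: Cauchy-Schwarz
  have hC : (∑ x ∈ cube (Fin n), |Tfun a b x|)
      ≤ Real.sqrt (N * ∑ x ∈ cube (Fin n), (Tfun a b x) ^ 2) := by
    have hcs := Finset.sum_mul_sq_le_sq_mul_sq (cube (Fin n)) (fun _ => (1:ℝ))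
      (fun x => |Tfun a b x|)
    simp only [one_mul, one_pow, sq_abs, Finset.sum_const, nsmul_eq_mul, mul_one] at hcs
    have h0 : (0:ℝ) ≤ ∑ x ∈ cube (Fin n), |Tfun a b x| :=
      Finset.sum_nonneg fun x _ => abs_nonneg _
    calc (∑ x ∈ cube (Fin n), |Tfun a b x|)
        = Real.sqrt ((∑ x ∈ cube (Fin n), |Tfun a b x|) ^ 2) := (Real.sqrt_sq h0).symm
      _ ≤ Real.sqrt (N * ∑ x ∈ cube (Fin n), (Tfun a b x) ^ 2) := Real.sqrt_le_sqrt hcs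
  -- Combine
  have hfinal : Real.sqrt (N * ∑ x ∈ cube (Fin n), (Tfun a b x) ^ 2)
      ≤ Real.sqrt (((G.maxDegree : ℝ) + 1) * n) * N := by
    calc Real.sqrt (N * ∑ x ∈ cube (Fin n), (Tfun a b x) ^ 2)
        ≤ Real.sqrt (N * ((n : ℝ) * ((G.maxDegree + 1) * N))) := by
          apply Real.sqrt_le_sqrt
          exact mul_le_mul_of_nonneg_left hD hNpos.le
      _ = Real.sqrt ((((G.maxDegree : ℝ) + 1) * n) * N ^ 2) := by ring_nf
      _ = Real.sqrt (((G.maxDegree : ℝ) + 1) * n) * N := by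
          rw [Real.sqrt_mul (by positivity), Real.sqrt_sq hNpos.le]
  rw [hA]
  rw [div_le_iff₀ hNpos]
  calc (∑ x ∈ cube (Fin n), (f x : ℝ) * Tfun a b x)
      ≤ ∑ x ∈ cube (Fin n), |Tfun a b x| := hB
    _ ≤ Real.sqrt (N * ∑ x ∈ cube (Fin n), (Tfun a b x) ^ 2) := hC
    _ ≤ Real.sqrt (((G.maxDegree : ℝ) + 1) * n) * N := hfinal
    _ = Real.sqrt ((G.maxDegree : ℝ) + 1) * Real.sqrt n * N := by
        rw [Real.sqrt_mul (by positivity)]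
end
end

section
/- Let p(x,y,z) = 2x(1 - 7y + z) + 4y - 7y² + 4yz + 6z + 3z², and for odd n ≥ 9 define f_n : {-1,1}^n → {-1,1} by f_n(x) = sgn( p( x_1, Σ_{i=2}^{n-2} x_i, x_{n-1} + x_n ) ). Then I[f_n] / I_GL(n,2) = 1 + 7/(32n) - 3/(32(n-2)) + 3/(16n²), where I_GL(n,2) = n · 2^{1-n} · C(n, (n-1)/2) is the Gotsman–Linial bound for degree-2 PTFs on an odd number n of variables. -/
open Finset
open scoped Classical

noncomputable section

/-- The counterexample polynomial `p(x,y,z) = 2x(1-7y+z) + 4y - 7y² + 4yz + 6z + 3z²`. -/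
def pGL (x y z : ℝ) : ℝ :=
  2 * x * (1 - 7 * y + z) + 4 * y - 7 * y ^ 2 + 4 * y * z + 6 * z + 3 * z ^ 2

/-- The argument `p(x_1, Σ_{i=2}^{n-2} x_i, x_{n-1} + x_n)` of the counterexample QTF,
with 1-based coordinates `x_1, …, x_n` encoded by indices `0, …, n-1` of `Fin n`. -/
def argGL {n : ℕ} (hn : 5 ≤ n) (x : Fin n → ℤ) : ℝ :=
  pGL ((x ⟨0, by omega⟩ : ℤ) : ℝ)
    (∑ i ∈ Finset.univ.filter (fun i : Fin n => 1 ≤ i.val ∧ i.val ≤ n - 3), ((x i : ℤ) : ℝ))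
    (((x ⟨n - 2, by omega⟩ : ℤ) : ℝ) + ((x ⟨n - 1, by omega⟩ : ℤ) : ℝ))

namespace GLAux

lemma mem_cube {V : Type*} [Fintype V] [DecidableEq V] {x : V → ℤ} :
    x ∈ cube V ↔ ∀ i, x i = -1 ∨ x i = 1 := by
  simp [cube, Fintype.mem_piFinset]

lemma card_cube (V : Type*) [Fintype V] [DecidableEq V] :
    (cube V).card = 2 ^ Fintype.card V := by
  simp [cube, Fintype.card_piFinset]

lemma flip_mem_cube {V : Type*} [Fintype V] [DecidableEq V] {x : V → ℤ} (hx : x ∈ cube V)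
    (i : V) : flipAt x i ∈ cube V := by
  rw [mem_cube] at hx ⊢
  intro j
  rcases eq_or_ne j i with rfl | h
  · simp [flipAt]
    rcases hx j with h | h <;> simp [h]
  · simpa [flipAt, Function.update_of_ne h] using hx j

lemma flip_apply_self {V : Type*} [DecidableEq V] (x : V → ℤ) (i : V) :
    flipAt x i i = -(x i) := by simp [flipAt]

lemma flip_apply_ne {V : Type*} [DecidableEq V] (x : V → ℤ) {i j : V} (h : j ≠ i) :
    flipAt x i j = x j := by simp [flipAt, Function.update_of_ne h]

/-- sign value of the polynomial at integer data `a ∈ {±1}`, `y = 2j`, `z`. -/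
def w (a j z : ℤ) : ℤ := sgn (pGL (a : ℝ) (2 * (j : ℝ)) (z : ℝ))

lemma sgn_pos {t : ℝ} (h : 0 < t) : sgn t = 1 := by simp [sgn, h]
lemma sgn_neg {t : ℝ} (h : t < 0) : sgn t = -1 := by
  simp [sgn, h, asymm h]

lemma w_1_m2 (j : ℤ) : w 1 j (-2) = if j = -1 then 1 else -1 := by
  have hp : pGL ((1:ℤ) : ℝ) (2 * (j : ℝ)) ((-2:ℤ) : ℝ) = -28*(j:ℝ)^2 - 36*j - 2 := by
    push_cast; unfold pGL; ring
  rcases eq_or_ne j (-1) with rfl | h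
  · rw [w, if_pos rfl, hp]; norm_num [sgn_pos]
  · rw [w, if_neg h, hp]
    have h2 : j ≤ -2 ∨ 0 ≤ j := by omega
    apply sgn_neg
    rcases h2 with h2 | h2
    · have : (j:ℝ) ≤ -2 := by exact_mod_cast h2
      nlinarith
    · have : (0:ℝ) ≤ j := by exact_mod_cast h2
      nlinarith


lemma w_1_0 (j : ℤ) : w 1 j 0 = if j = 0 then 1 else -1 := by
  have hp : pGL ((1:ℤ) : ℝ) (2 * (j : ℝ)) ((0:ℤ) : ℝ) = -28*(j:ℝ)^2 - 20*j + 2 := by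
    push_cast; unfold pGL; ring
  rcases eq_or_ne j 0 with rfl | h
  · rw [w, if_pos rfl, hp]; norm_num [sgn_pos]
  · rw [w, if_neg h, hp]
    apply sgn_neg
    rcases (by omega : j ≤ -1 ∨ 1 ≤ j) with h2 | h2
    · have : (j:ℝ) ≤ -1 := by exact_mod_cast h2
      nlinarith
    · have : (1:ℝ) ≤ j := by exact_mod_cast h2
      nlinarith

lemma w_1_2 (j : ℤ) : w 1 j 2 = if j = -1 ∨ j = 0 then 1 else -1 := by
  have hp : pGL ((1:ℤ) : ℝ) (2 * (j : ℝ)) ((2:ℤ) : ℝ) = -28*(j:ℝ)^2 - 4*j + 30 := by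
    push_cast; unfold pGL; ring
  by_cases h : j = -1 ∨ j = 0
  · rw [w, if_pos h, hp]
    rcases h with rfl | rfl <;> norm_num [sgn_pos]
  · rw [w, if_neg h, hp]
    apply sgn_neg
    rcases (by omega : j ≤ -2 ∨ 1 ≤ j) with h2 | h2
    · have : (j:ℝ) ≤ -2 := by exact_mod_cast h2
      nlinarith
    · have : (1:ℝ) ≤ j := by exact_mod_cast h2
      nlinarith

lemma w_m1_m2 (j : ℤ) : w (-1) j (-2) = if j = 0 then 1 else -1 := by
  have hp : pGL ((-1:ℤ) : ℝ) (2 * (j : ℝ)) ((-2:ℤ) : ℝ) = -28*(j:ℝ)^2 + 20*j + 2 := by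
    push_cast; unfold pGL; ring
  rcases eq_or_ne j 0 with rfl | h
  · rw [w, if_pos rfl, hp]; norm_num [sgn_pos]
  · rw [w, if_neg h, hp]
    apply sgn_neg
    rcases (by omega : j ≤ -1 ∨ 1 ≤ j) with h2 | h2
    · have : (j:ℝ) ≤ -1 := by exact_mod_cast h2
      nlinarith
    · have : (1:ℝ) ≤ j := by exact_mod_cast h2
      nlinarith

lemma w_m1_0 (j : ℤ) : w (-1) j 0 = if j = 1 then 1 else -1 := by
  have hp : pGL ((-1:ℤ) : ℝ) (2 * (j : ℝ)) ((0:ℤ) : ℝ) = -28*(j:ℝ)^2 + 36*j - 2 := by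
    push_cast; unfold pGL; ring
  rcases eq_or_ne j 1 with rfl | h
  · rw [w, if_pos rfl, hp]; norm_num [sgn_pos]
  · rw [w, if_neg h, hp]
    apply sgn_neg
    rcases (by omega : j ≤ 0 ∨ 2 ≤ j) with h2 | h2
    · have : (j:ℝ) ≤ 0 := by exact_mod_cast h2
      nlinarith
    · have : (2:ℝ) ≤ j := by exact_mod_cast h2
      nlinarith

lemma w_m1_2 (j : ℤ) : w (-1) j 2 = if j = 0 ∨ j = 1 ∨ j = 2 then 1 else -1 := by
  have hp : pGL ((-1:ℤ) : ℝ) (2 * (j : ℝ)) ((2:ℤ) : ℝ) = -28*(j:ℝ)^2 + 52*j + 18 := by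
    push_cast; unfold pGL; ring
  by_cases h : j = 0 ∨ j = 1 ∨ j = 2
  · rw [w, if_pos h, hp]
    rcases h with rfl | rfl | rfl <;> norm_num [sgn_pos]
  · rw [w, if_neg h, hp]
    apply sgn_neg
    rcases (by omega : j ≤ -1 ∨ 3 ≤ j) with h2 | h2
    · have : (j:ℝ) ≤ -1 := by exact_mod_cast h2
      nlinarith
    · have : (3:ℝ) ≤ j := by exact_mod_cast h2
      nlinarith


def midSet (n : ℕ) : Finset (Fin n) := univ.filter fun i => 1 ≤ i.val ∧ i.val ≤ n - 3

def cnt1 {n : ℕ} (x : Fin n → ℤ) : ℕ := ((midSet n).filter fun i => x i = 1).card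

lemma card_midSet {n : ℕ} (hn : 9 ≤ n) : (midSet n).card = n - 3 := by
  have : (midSet n).card = (Finset.Icc 1 (n-3)).card := by
    apply Finset.card_bij (fun i _ => i.val)
    · intro i hi
      simp only [midSet, mem_filter] at hi
      simp [Finset.mem_Icc, hi.2.1, hi.2.2]
    · intro i hi j hj h
      exact Fin.val_injective h
    · intro b hb
      simp only [Finset.mem_Icc] at hb
      refine ⟨⟨b, by omega⟩, ?_, rfl⟩
      simp [midSet, hb.1, hb.2]
  rw [this, Nat.card_Icc]
  omega

lemma cnt1_le {n : ℕ} (hn : 9 ≤ n) (x : Fin n → ℤ) : cnt1 x ≤ n - 3 := by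
  rw [← card_midSet hn]
  exact Finset.card_filter_le _ _

lemma sum_mid {n : ℕ} (hn : 9 ≤ n) {x : Fin n → ℤ} (hx : x ∈ cube (Fin n)) :
    ∑ i ∈ midSet n, ((x i : ℤ) : ℝ) = 2 * (cnt1 x : ℝ) - ((n - 3 : ℕ) : ℝ) := by
  rw [← Finset.sum_filter_add_sum_filter_not (midSet n) (fun i => x i = 1)]
  have e1 : ∀ i ∈ (midSet n).filter (fun i => x i = 1), ((x i : ℤ) : ℝ) = 1 := by
    intro i hi
    simp only [mem_filter] at hi
    rw [hi.2]; norm_num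
  have e2 : ∀ i ∈ (midSet n).filter (fun i => ¬ x i = 1), ((x i : ℤ) : ℝ) = -1 := by
    intro i hi
    simp only [mem_filter] at hi
    rcases (mem_cube.1 hx) i with h | h
    · rw [h]; norm_num
    · exact absurd h hi.2
  have hcard : ((midSet n).filter (fun i => ¬ x i = 1)).card = (n - 3) - cnt1 x := by
    have := Finset.card_filter_add_card_filter_not (s := midSet n)
      (p := fun i => x i = 1)
    rw [card_midSet hn] at this
    have := cnt1_le hn x
    simp only [cnt1] at *
    omega
  rw [Finset.sum_congr rfl e1, Finset.sum_congr rfl e2, Finset.sum_const, Finset.sum_const,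
    hcard, nsmul_eq_mul, nsmul_eq_mul]
  rw [Nat.cast_sub (cnt1_le hn x),
    show (((midSet n).filter (fun i => x i = 1)).card) = cnt1 x from rfl]
  ring


lemma fiber_card {n : ℕ} (hn : 9 ≤ n) (a s t : ℤ) (ha : a = -1 ∨ a = 1)
    (hs : s = -1 ∨ s = 1) (ht : t = -1 ∨ t = 1) (k : ℕ) (hk : k ≤ n - 3) :
    ((cube (Fin n)).filter fun x => x ⟨0, by omega⟩ = a ∧ x ⟨n-2, by omega⟩ = s ∧
      x ⟨n-1, by omega⟩ = t ∧ cnt1 x = k).card = (n - 3).choose k := by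
  have hmv : ∀ i : Fin n, i ∈ midSet n ↔ (1 ≤ i.val ∧ i.val ≤ n - 3) := by
    intro i; simp [midSet]
  rw [← card_midSet hn, ← Finset.card_powersetCard]
  apply Finset.card_nbij' (fun x => (midSet n).filter fun i => x i = 1)
    (fun A => fun i : Fin n => if i.val = 0 then a else if i.val = n-2 then s
      else if i.val = n-1 then t else if i ∈ A then 1 else -1)
  · intro x hx
    simp only [Finset.mem_coe, Finset.mem_filter] at hx
    rw [Finset.mem_coe, Finset.mem_powersetCard]
    exact ⟨Finset.filter_subset _ _, hx.2.2.2.2⟩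
  · intro A hA
    rw [Finset.mem_coe, Finset.mem_powersetCard] at hA
    simp only [Finset.mem_coe, Finset.mem_filter]
    have hAm : ∀ i ∈ A, 1 ≤ i.val ∧ i.val ≤ n - 3 := fun i hi => (hmv i).1 (hA.1 hi)
    refine ⟨?_, ?_, ?_, ?_, ?_⟩
    · rw [mem_cube]
      intro i
      have c2 : (n:ℕ) - 2 ≠ 0 := by omega
      have c1 : (n:ℕ) - 1 ≠ 0 := by omega
      have c12 : (n:ℕ) - 1 ≠ n - 2 := by omega
      by_cases h0 : i.val = 0
      · simp [h0, ha]
      · by_cases h2 : i.val = n-2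
        · simp [h0, h2, c2, hs]
        · by_cases h1 : i.val = n-1
          · simp [h0, h2, h1, c1, c12, ht]
          · by_cases hiA : i ∈ A <;> simp [h0, h2, h1, hiA]
    · simp
    · have : (n:ℕ) - 2 ≠ 0 := by omega
      simp [this, if_pos]
    · have e0 : (n:ℕ) - 1 ≠ 0 := by omega
      have e2 : (n:ℕ) - 1 ≠ n - 2 := by omega
      simp [e0, e2]
    · rw [cnt1, ← hA.2]
      congr 1
      ext i
      simp only [Finset.mem_filter, hmv]
      constructor
      · rintro ⟨hi, hval⟩
        have h0 : ¬ i.val = 0 := by omega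
        have h2 : ¬ i.val = n-2 := by omega
        have h1 : ¬ i.val = n-1 := by omega
        rw [if_neg h0, if_neg h2, if_neg h1] at hval
        by_cases hiA : i ∈ A
        · exact hiA
        · rw [if_neg hiA] at hval; norm_num at hval
      · intro hiA
        have him := hAm i hiA
        have h0 : ¬ i.val = 0 := by omega
        have h2 : ¬ i.val = n-2 := by omega
        have h1 : ¬ i.val = n-1 := by omega
        exact ⟨him, by rw [if_neg h0, if_neg h2, if_neg h1, if_pos hiA]⟩
  · intro x hx
    simp only [Finset.mem_coe, Finset.mem_filter] at hx
    funext i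
    beta_reduce
    by_cases h0 : i.val = 0
    · have : i = ⟨0, by omega⟩ := by ext; exact h0
      simp only [h0, if_pos]
      rw [this, hx.2.1]
    · by_cases h2 : i.val = n-2
      · have : i = ⟨n-2, by omega⟩ := by ext; exact h2
        rw [if_neg h0, if_pos h2, this, hx.2.2.1]
      · by_cases h1 : i.val = n-1
        · have : i = ⟨n-1, by omega⟩ := by ext; exact h1
          rw [if_neg h0, if_neg h2, if_pos h1, this, hx.2.2.2.1]
        · rw [if_neg h0, if_neg h2, if_neg h1]
          have him : i ∈ midSet n := by
            rw [hmv]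
            have := i.isLt
            omega
          by_cases hx1 : x i = 1
          · rw [if_pos (Finset.mem_filter.2 ⟨him, hx1⟩), hx1]
          · rw [if_neg (fun hmem : i ∈ (midSet n).filter (fun j => x j = 1) => hx1 (Finset.mem_filter.1 hmem).2)]
            rcases mem_cube.1 hx.1 i with h | h
            · rw [h]
            · exact absurd h hx1
  · intro A hA
    rw [Finset.mem_coe, Finset.mem_powersetCard] at hA
    ext i
    simp only [Finset.mem_filter, hmv]
    constructor
    · rintro ⟨hi, hval⟩
      have h0 : ¬ i.val = 0 := by omega
      have h2 : ¬ i.val = n-2 := by omega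
      have h1 : ¬ i.val = n-1 := by omega
      rw [if_neg h0, if_neg h2, if_neg h1] at hval
      by_cases hiA : i ∈ A
      · exact hiA
      · rw [if_neg hiA] at hval; norm_num at hval
    · intro hiA
      have him := (hmv i).1 (hA.1 hiA)
      have h0 : ¬ i.val = 0 := by omega
      have h2 : ¬ i.val = n-2 := by omega
      have h1 : ¬ i.val = n-1 := by omega
      exact ⟨him, by rw [if_neg h0, if_neg h2, if_neg h1, if_pos hiA]⟩

lemma cube_sum_eq {n : ℕ} (hn : 9 ≤ n) (g : ℤ → ℤ → ℤ → ℕ → ℝ) :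
    ∑ x ∈ cube (Fin n), g (x ⟨0, by omega⟩) (x ⟨n-2, by omega⟩) (x ⟨n-1, by omega⟩) (cnt1 x)
      = ∑ a ∈ ({-1,1} : Finset ℤ), ∑ s ∈ ({-1,1} : Finset ℤ), ∑ t ∈ ({-1,1} : Finset ℤ),
          ∑ k ∈ Finset.range (n - 2), ((n-3).choose k : ℝ) * g a s t k := by
  classical
  have hmap : ∀ x ∈ cube (Fin n),
      (x ⟨0, by omega⟩, x ⟨n-2, by omega⟩, x ⟨n-1, by omega⟩, cnt1 x) ∈
        (({-1,1}:Finset ℤ) ×ˢ (({-1,1}:Finset ℤ) ×ˢ (({-1,1}:Finset ℤ) ×ˢ Finset.range (n-2)))) := by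
    intro x hx
    have h := mem_cube.1 hx
    simp only [Finset.mem_product, Finset.mem_insert, Finset.mem_singleton, Finset.mem_range]
    refine ⟨h _, h _, h _, ?_⟩
    have := cnt1_le hn x
    omega
  rw [← Finset.sum_fiberwise_of_maps_to hmap
    (fun x => g (x ⟨0, by omega⟩) (x ⟨n-2, by omega⟩) (x ⟨n-1, by omega⟩) (cnt1 x))]
  rw [Finset.sum_product]
  refine Finset.sum_congr rfl fun a ha => ?_
  rw [Finset.sum_product]
  refine Finset.sum_congr rfl fun s hs => ?_
  rw [Finset.sum_product]
  refine Finset.sum_congr rfl fun t ht => ?_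
  refine Finset.sum_congr rfl fun k hk => ?_
  simp only [Finset.mem_insert, Finset.mem_singleton] at ha hs ht
  simp only [Finset.mem_range] at hk
  have hpred : ∀ x : Fin n → ℤ,
      ((x ⟨0, by omega⟩, x ⟨n-2, by omega⟩, x ⟨n-1, by omega⟩, cnt1 x)
        = ((a, s, t, k) : ℤ × ℤ × ℤ × ℕ))
      ↔ (x ⟨0, by omega⟩ = a ∧ x ⟨n-2, by omega⟩ = s ∧ x ⟨n-1, by omega⟩ = t ∧ cnt1 x = k) := by
    intro x
    simp [Prod.ext_iff]
  have hconst : ∀ x ∈ (cube (Fin n)).filter (fun x =>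
      (x ⟨0, by omega⟩, x ⟨n-2, by omega⟩, x ⟨n-1, by omega⟩, cnt1 x)
        = ((a, s, t, k) : ℤ × ℤ × ℤ × ℕ)),
      g (x ⟨0, by omega⟩) (x ⟨n-2, by omega⟩) (x ⟨n-1, by omega⟩) (cnt1 x) = g a s t k := by
    intro x hx
    rw [Finset.mem_filter] at hx
    obtain ⟨h1, h2, h3, h4⟩ := (hpred x).1 hx.2
    rw [h1, h2, h3, h4]
  rw [Finset.sum_congr rfl hconst, Finset.sum_const, Finset.filter_congr (fun x _ => hpred x),
    fiber_card hn a s t ha hs ht k (by omega), nsmul_eq_mul]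

lemma mem_midSet {n : ℕ} {i : Fin n} : i ∈ midSet n ↔ 1 ≤ i.val ∧ i.val ≤ n - 3 := by
  simp [midSet]

lemma cnt1_flip_notmid {n : ℕ} (x : Fin n → ℤ) {i : Fin n} (hi : i ∉ midSet n) :
    cnt1 (flipAt x i) = cnt1 x := by
  unfold cnt1
  congr 1
  apply Finset.filter_congr
  intro j hj
  have : j ≠ i := by rintro rfl; exact hi hj
  rw [flip_apply_ne x this]

lemma cnt1_flip_pos {n : ℕ} {x : Fin n → ℤ} {i : Fin n} (hi : i ∈ midSet n) (hxi : x i = 1) :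
    cnt1 (flipAt x i) = cnt1 x - 1 ∧ 1 ≤ cnt1 x := by
  have hmem : i ∈ (midSet n).filter fun j => x j = 1 := Finset.mem_filter.2 ⟨hi, hxi⟩
  have hset : ((midSet n).filter fun j => flipAt x i j = 1)
      = ((midSet n).filter fun j => x j = 1).erase i := by
    ext j
    rw [Finset.mem_erase, Finset.mem_filter, Finset.mem_filter]
    constructor
    · rintro ⟨hjm, hjv⟩
      rcases eq_or_ne j i with rfl | hne
      · rw [flip_apply_self, hxi] at hjv; norm_num at hjv
      · rw [flip_apply_ne x hne] at hjv; exact ⟨hne, hjm, hjv⟩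
    · rintro ⟨hne, hjm, hjv⟩
      rw [flip_apply_ne x hne]; exact ⟨hjm, hjv⟩
  constructor
  · rw [cnt1, hset, Finset.card_erase_of_mem hmem]; rfl
  · exact Finset.card_pos.2 ⟨i, hmem⟩

lemma cnt1_flip_neg {n : ℕ} {x : Fin n → ℤ} {i : Fin n} (hi : i ∈ midSet n) (hxi : x i = -1) :
    cnt1 (flipAt x i) = cnt1 x + 1 := by
  have hnmem : i ∉ (midSet n).filter fun j => x j = 1 := by
    rw [Finset.mem_filter]; rintro ⟨-, hv⟩; rw [hxi] at hv; norm_num at hv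
  have hset : ((midSet n).filter fun j => flipAt x i j = 1)
      = insert i ((midSet n).filter fun j => x j = 1) := by
    ext j
    rw [Finset.mem_insert, Finset.mem_filter, Finset.mem_filter]
    constructor
    · rintro ⟨hjm, hjv⟩
      rcases eq_or_ne j i with rfl | hne
      · exact Or.inl rfl
      · rw [flip_apply_ne x hne] at hjv; exact Or.inr ⟨hjm, hjv⟩
    · rintro (rfl | ⟨hjm, hjv⟩)
      · exact ⟨hi, by rw [flip_apply_self, hxi]; norm_num⟩
      · rcases eq_or_ne j i with rfl | hne
        · exact ⟨hi, by rw [flip_apply_self, hxi]; norm_num⟩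
        · rw [flip_apply_ne x hne]; exact ⟨hjm, hjv⟩
  rw [cnt1, hset, Finset.card_insert_of_notMem hnmem]; rfl

lemma sgn_argGL {n : ℕ} (hn : 9 ≤ n) (h : ℕ) (hh : n - 3 = 2 * h) (h5 : 5 ≤ n)
    {x : Fin n → ℤ} (hx : x ∈ cube (Fin n)) :
    sgn (argGL h5 x) = w (x ⟨0, by omega⟩) ((cnt1 x : ℤ) - h)
      (x ⟨n-2, by omega⟩ + x ⟨n-1, by omega⟩) := by
  have e2 : ∑ i ∈ Finset.univ.filter (fun i : Fin n => 1 ≤ i.val ∧ i.val ≤ n - 3), ((x i : ℤ):ℝ)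
      = 2 * ((((cnt1 x : ℤ) - h : ℤ)) : ℝ) := by
    rw [show (Finset.univ.filter (fun i : Fin n => 1 ≤ i.val ∧ i.val ≤ n - 3)) = midSet n
      from rfl, sum_mid hn hx]
    have h1 : ((n-3:ℕ):ℝ) = 2*(h:ℝ) := by
      rw [hh]; push_cast; ring
    rw [h1]; push_cast; ring
  rw [argGL, e2, w]
  push_cast
  rfl

def Ez (u v : ℤ) : ℝ := if u = v then 0 else 1

def G (h : ℕ) (a s t : ℤ) (k : ℕ) : ℝ :=
  Ez (w a ((k:ℤ) - h) (s+t)) (w (-a) ((k:ℤ) - h) (s+t))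
  + Ez (w a ((k:ℤ) - h) (s+t)) (w a ((k:ℤ) - h) (-s+t))
  + Ez (w a ((k:ℤ) - h) (s+t)) (w a ((k:ℤ) - h) (s-t))
  + (k:ℝ) * Ez (w a ((k:ℤ) - h) (s+t)) (w a ((k:ℤ) - h - 1) (s+t))
  + (2*(h:ℝ) - (k:ℝ)) * Ez (w a ((k:ℤ) - h) (s+t)) (w a ((k:ℤ) - h + 1) (s+t))

set_option maxHeartbeats 2000000 in
lemma sum_ind {n : ℕ} (hn : 9 ≤ n) (h : ℕ) (hh : n - 3 = 2 * h) (h5 : 5 ≤ n)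
    (f : (Fin n → ℤ) → ℤ) (hf : ∀ x ∈ cube (Fin n), f x = sgn (argGL h5 x))
    {x : Fin n → ℤ} (hx : x ∈ cube (Fin n)) :
    ∑ i : Fin n, (if f x ≠ f (flipAt x i) then (1:ℝ) else 0)
      = G h (x ⟨0, by omega⟩) (x ⟨n-2, by omega⟩) (x ⟨n-1, by omega⟩) (cnt1 x) := by
  classical
  set i0 : Fin n := ⟨0, by omega⟩ with hi0
  set ip : Fin n := ⟨n-2, by omega⟩ with hip
  set iq : Fin n := ⟨n-1, by omega⟩ with hiq
  have hcube := mem_cube.1 hx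
  set a := x i0
  set s := x ip
  set t := x iq
  set k := cnt1 x with hk
  have hi0m : i0 ∉ midSet n := by simp [mem_midSet, hi0]
  have hipm : ip ∉ midSet n := by simp [mem_midSet, hip]; omega
  have hiqm : iq ∉ midSet n := by simp [mem_midSet, hiq]; omega
  have hne_p0 : ip ≠ i0 := by simp [hip, hi0, Fin.ext_iff]; omega
  have hne_q0 : iq ≠ i0 := by simp [hiq, hi0, Fin.ext_iff]; omega
  have hne_qp : iq ≠ ip := by simp [hiq, hip, Fin.ext_iff]; omega
  have hEz : ∀ y : Fin n → ℤ, (if f x ≠ f y then (1:ℝ) else 0) = Ez (f x) (f y) := by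
    intro y
    unfold Ez
    by_cases hc : f x = f y <;> simp [hc]
  have hfx : f x = w a ((k:ℤ) - h) (s + t) := by
    rw [hf x hx, sgn_argGL hn h hh h5 hx]
  -- value after flipping a given coordinate
  have hflip : ∀ i : Fin n, f (flipAt x i)
      = w (flipAt x i i0) ((cnt1 (flipAt x i) : ℤ) - h) (flipAt x i ip + flipAt x i iq) := by
    intro i
    rw [hf _ (flip_mem_cube hx i), sgn_argGL hn h hh h5 (flip_mem_cube hx i)]
  -- flip at i0
  have hv0 : f (flipAt x i0) = w (-a) ((k:ℤ) - h) (s + t) := by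
    rw [hflip i0, flip_apply_self, cnt1_flip_notmid x hi0m,
      flip_apply_ne x hne_p0, flip_apply_ne x hne_q0]
  have hvp : f (flipAt x ip) = w a ((k:ℤ) - h) (-s + t) := by
    rw [hflip ip, flip_apply_self, cnt1_flip_notmid x hipm,
      flip_apply_ne x (Ne.symm hne_p0), flip_apply_ne x hne_qp]
  have hvq : f (flipAt x iq) = w a ((k:ℤ) - h) (s + -t) := by
    rw [hflip iq, flip_apply_self, cnt1_flip_notmid x hiqm,
      flip_apply_ne x (Ne.symm hne_q0), flip_apply_ne x (Ne.symm hne_qp)]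
  -- the index set split
  rw [Finset.sum_congr rfl (fun i _ => hEz (flipAt x i)),
    ← Finset.sum_filter_add_sum_filter_not Finset.univ (fun i : Fin n => 1 ≤ i.val ∧ i.val ≤ n - 3)]
  have hspecial : Finset.univ.filter (fun i : Fin n => ¬ (1 ≤ i.val ∧ i.val ≤ n - 3))
      = {i0, ip, iq} := by
    ext i
    simp only [Finset.mem_filter, Finset.mem_univ, true_and, Finset.mem_insert,
      Finset.mem_singleton, hi0, hip, hiq, Fin.ext_iff]
    have := i.isLt
    omega
  have hmid_eq : Finset.univ.filter (fun i : Fin n => 1 ≤ i.val ∧ i.val ≤ n - 3) = midSet n := rfl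
  -- middle part
  have hmid : ∑ i ∈ midSet n, Ez (f x) (f (flipAt x i))
      = (k:ℝ) * Ez (w a ((k:ℤ) - h) (s+t)) (w a ((k:ℤ) - h - 1) (s+t))
        + (2*(h:ℝ) - (k:ℝ)) * Ez (w a ((k:ℤ) - h) (s+t)) (w a ((k:ℤ) - h + 1) (s+t)) := by
    rw [← Finset.sum_filter_add_sum_filter_not (midSet n) (fun i => x i = 1)]
    have e1 : ∀ i ∈ (midSet n).filter (fun i => x i = 1),
        Ez (f x) (f (flipAt x i))
          = Ez (w a ((k:ℤ) - h) (s+t)) (w a ((k:ℤ) - h - 1) (s+t)) := by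
      intro i hi
      rw [Finset.mem_filter] at hi
      obtain ⟨hc, hc1⟩ := cnt1_flip_pos hi.1 hi.2
      have him := hi.1
      have hni0 : i0 ≠ i := fun e => hi0m (e ▸ him)
      have hnip : ip ≠ i := fun e => hipm (e ▸ him)
      have hniq : iq ≠ i := fun e => hiqm (e ▸ him)
      rw [hfx, hflip i, flip_apply_ne x hni0, flip_apply_ne x hnip, flip_apply_ne x hniq, hc]
      have : ((cnt1 x - 1 : ℕ) : ℤ) - h = (cnt1 x : ℤ) - h - 1 := by omega
      rw [this]
    have e2 : ∀ i ∈ (midSet n).filter (fun i => ¬ x i = 1),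
        Ez (f x) (f (flipAt x i))
          = Ez (w a ((k:ℤ) - h) (s+t)) (w a ((k:ℤ) - h + 1) (s+t)) := by
      intro i hi
      rw [Finset.mem_filter] at hi
      have hxi : x i = -1 := by
        rcases hcube i with hv | hv
        · exact hv
        · exact absurd hv hi.2
      have hc := cnt1_flip_neg hi.1 hxi
      have him := hi.1
      have hni0 : i0 ≠ i := fun e => hi0m (e ▸ him)
      have hnip : ip ≠ i := fun e => hipm (e ▸ him)
      have hniq : iq ≠ i := fun e => hiqm (e ▸ him)
      rw [hfx, hflip i, flip_apply_ne x hni0, flip_apply_ne x hnip, flip_apply_ne x hniq, hc]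
      have : ((cnt1 x + 1 : ℕ) : ℤ) - h = (cnt1 x : ℤ) - h + 1 := by omega
      rw [this]
    rw [Finset.sum_congr rfl e1, Finset.sum_congr rfl e2, Finset.sum_const, Finset.sum_const]
    have hcard2 : ((midSet n).filter (fun i => ¬ x i = 1)).card = 2 * h - k := by
      have h1 := Finset.card_filter_add_card_filter_not (s := midSet n)
        (p := fun i => x i = 1)
      rw [card_midSet hn] at h1
      have hle := cnt1_le hn x
      have hk' : ((midSet n).filter (fun i => x i = 1)).card = k := rfl
      omega
    rw [hcard2, show (((midSet n).filter (fun i => x i = 1)).card) = k from rfl,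
      nsmul_eq_mul, nsmul_eq_mul, Nat.cast_sub (show k ≤ 2 * h by have := cnt1_le hn x; omega)]
    push_cast
    ring
  -- special part
  have hsp : ∑ i ∈ ({i0, ip, iq} : Finset (Fin n)), Ez (f x) (f (flipAt x i))
      = Ez (w a ((k:ℤ) - h) (s+t)) (w (-a) ((k:ℤ) - h) (s+t))
        + Ez (w a ((k:ℤ) - h) (s+t)) (w a ((k:ℤ) - h) (-s+t))
        + Ez (w a ((k:ℤ) - h) (s+t)) (w a ((k:ℤ) - h) (s-t)) := by
    rw [Finset.sum_insert (by simp [Finset.mem_insert, hne_p0.symm, hne_q0.symm]),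
      Finset.sum_insert (by simp [hne_qp.symm]), Finset.sum_singleton]
    rw [hfx, hv0, hvp, hvq]
    have : s + -t = s - t := by ring
    rw [this]
    ring
  rw [hmid_eq, hspecial, hmid, hsp, G]
  ring

lemma castk {h k : ℕ} (d : ℤ) (h' : (k:ℤ) = (h:ℤ) + d) : (k:ℝ) = (h:ℝ) + (d:ℝ) := by
  exact_mod_cast h'


lemma G_ppp (h k : ℕ) (hh : 3 ≤ h) (hk : k ≤ 2*h) :
    G h 1 1 1 k = (if k = h-3 then (0) else 0) + (if k = h-2 then ((h:ℝ)+2) else 0) + (if k = h-1 then ((h:ℝ)+2) else 0) + (if k = h then ((h:ℝ)) else 0) + (if k = h+1 then ((h:ℝ)+2) else 0) + (if k = h+2 then (1) else 0) + (if k = h+3 then (0) else 0) := by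
  have hG : G h 1 1 1 k =
      Ez (w 1 ((k:ℤ) - h) 2) (w (-1) ((k:ℤ) - h) 2)
      + Ez (w 1 ((k:ℤ) - h) 2) (w 1 ((k:ℤ) - h) 0)
      + Ez (w 1 ((k:ℤ) - h) 2) (w 1 ((k:ℤ) - h) 0)
      + (k:ℝ) * Ez (w 1 ((k:ℤ) - h) 2) (w 1 ((k:ℤ) - h - 1) 2)
      + (2*(h:ℝ) - (k:ℝ)) * Ez (w 1 ((k:ℤ) - h) 2) (w 1 ((k:ℤ) - h + 1) 2) := by
    rw [G]; norm_num
  rw [hG]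
  simp only [w_1_m2, w_1_0, w_1_2, w_m1_m2, w_m1_0, w_m1_2]
  set j : ℤ := (k:ℤ) - h with hjdef
  by_cases hc1 : k = h-3
  · have hj : j = (-3) := by omega
    have hkr : (k:ℝ) = (h:ℝ) + (-3:ℤ) := castk _ (by omega)
    rw [if_pos hc1, if_neg (by omega : ¬ k = h-2), if_neg (by omega : ¬ k = h-1), if_neg (by omega : ¬ k = h), if_neg (by omega : ¬ k = h+1), if_neg (by omega : ¬ k = h+2), if_neg (by omega : ¬ k = h+3), hj]
    norm_num [Ez, hkr]
    try ring
  by_cases hc2 : k = h-2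
  · have hj : j = (-2) := by omega
    have hkr : (k:ℝ) = (h:ℝ) + (-2:ℤ) := castk _ (by omega)
    rw [if_neg hc1, if_pos hc2, if_neg (by omega : ¬ k = h-1), if_neg (by omega : ¬ k = h), if_neg (by omega : ¬ k = h+1), if_neg (by omega : ¬ k = h+2), if_neg (by omega : ¬ k = h+3), hj]
    norm_num [Ez, hkr]
    try ring
  by_cases hc3 : k = h-1
  · have hj : j = (-1) := by omega
    have hkr : (k:ℝ) = (h:ℝ) + (-1:ℤ) := castk _ (by omega)
    rw [if_neg hc1, if_neg hc2, if_pos hc3, if_neg (by omega : ¬ k = h), if_neg (by omega : ¬ k = h+1), if_neg (by omega : ¬ k = h+2), if_neg (by omega : ¬ k = h+3), hj]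
    norm_num [Ez, hkr]
    try ring
  by_cases hc4 : k = h
  · have hj : j = 0 := by omega
    have hkr : (k:ℝ) = (h:ℝ) + (0:ℤ) := castk _ (by omega)
    rw [if_neg hc1, if_neg hc2, if_neg hc3, if_pos hc4, if_neg (by omega : ¬ k = h+1), if_neg (by omega : ¬ k = h+2), if_neg (by omega : ¬ k = h+3), hj]
    norm_num [Ez, hkr]
    try ring
  by_cases hc5 : k = h+1
  · have hj : j = 1 := by omega
    have hkr : (k:ℝ) = (h:ℝ) + (1:ℤ) := castk _ (by omega)
    rw [if_neg hc1, if_neg hc2, if_neg hc3, if_neg hc4, if_pos hc5, if_neg (by omega : ¬ k = h+2), if_neg (by omega : ¬ k = h+3), hj]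
    norm_num [Ez, hkr]
    try ring
  by_cases hc6 : k = h+2
  · have hj : j = 2 := by omega
    have hkr : (k:ℝ) = (h:ℝ) + (2:ℤ) := castk _ (by omega)
    rw [if_neg hc1, if_neg hc2, if_neg hc3, if_neg hc4, if_neg hc5, if_pos hc6, if_neg (by omega : ¬ k = h+3), hj]
    norm_num [Ez, hkr]
    try ring
  by_cases hc7 : k = h+3
  · have hj : j = 3 := by omega
    have hkr : (k:ℝ) = (h:ℝ) + (3:ℤ) := castk _ (by omega)
    rw [if_neg hc1, if_neg hc2, if_neg hc3, if_neg hc4, if_neg hc5, if_neg hc6, if_pos hc7, hj]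
    norm_num [Ez, hkr]
    try ring
  · have hout : j ≤ -4 ∨ 4 ≤ j := by omega
    rw [if_neg hc1, if_neg hc2, if_neg hc3, if_neg hc4, if_neg hc5, if_neg hc6, if_neg hc7,
      if_neg (by omega : ¬ ((j = -1 ∨ j = 0))), if_neg (by omega : ¬ ((j = 0 ∨ j = 1 ∨ j = 2))), if_neg (by omega : ¬ (j = 0)), if_neg (by omega : ¬ ((j - 1 = -1 ∨ j - 1 = 0))), if_neg (by omega : ¬ ((j + 1 = -1 ∨ j + 1 = 0)))]
    norm_num [Ez]

lemma G_ppm (h k : ℕ) (hh : 3 ≤ h) (hk : k ≤ 2*h) :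
    G h 1 1 (-1) k = (if k = h-3 then (0) else 0) + (if k = h-2 then (0) else 0) + (if k = h-1 then ((h:ℝ)+3) else 0) + (if k = h then (2*(h:ℝ)+2) else 0) + (if k = h+1 then ((h:ℝ)+2) else 0) + (if k = h+2 then (0) else 0) + (if k = h+3 then (0) else 0) := by
  have hG : G h 1 1 (-1) k =
      Ez (w 1 ((k:ℤ) - h) 0) (w (-1) ((k:ℤ) - h) 0)
      + Ez (w 1 ((k:ℤ) - h) 0) (w 1 ((k:ℤ) - h) (-2))
      + Ez (w 1 ((k:ℤ) - h) 0) (w 1 ((k:ℤ) - h) 2)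
      + (k:ℝ) * Ez (w 1 ((k:ℤ) - h) 0) (w 1 ((k:ℤ) - h - 1) 0)
      + (2*(h:ℝ) - (k:ℝ)) * Ez (w 1 ((k:ℤ) - h) 0) (w 1 ((k:ℤ) - h + 1) 0) := by
    rw [G]; norm_num
  rw [hG]
  simp only [w_1_m2, w_1_0, w_1_2, w_m1_m2, w_m1_0, w_m1_2]
  set j : ℤ := (k:ℤ) - h with hjdef
  by_cases hc1 : k = h-3
  · have hj : j = (-3) := by omega
    have hkr : (k:ℝ) = (h:ℝ) + (-3:ℤ) := castk _ (by omega)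
    rw [if_pos hc1, if_neg (by omega : ¬ k = h-2), if_neg (by omega : ¬ k = h-1), if_neg (by omega : ¬ k = h), if_neg (by omega : ¬ k = h+1), if_neg (by omega : ¬ k = h+2), if_neg (by omega : ¬ k = h+3), hj]
    norm_num [Ez, hkr]
    try ring
  by_cases hc2 : k = h-2
  · have hj : j = (-2) := by omega
    have hkr : (k:ℝ) = (h:ℝ) + (-2:ℤ) := castk _ (by omega)
    rw [if_neg hc1, if_pos hc2, if_neg (by omega : ¬ k = h-1), if_neg (by omega : ¬ k = h), if_neg (by omega : ¬ k = h+1), if_neg (by omega : ¬ k = h+2), if_neg (by omega : ¬ k = h+3), hj]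
    norm_num [Ez, hkr]
    try ring
  by_cases hc3 : k = h-1
  · have hj : j = (-1) := by omega
    have hkr : (k:ℝ) = (h:ℝ) + (-1:ℤ) := castk _ (by omega)
    rw [if_neg hc1, if_neg hc2, if_pos hc3, if_neg (by omega : ¬ k = h), if_neg (by omega : ¬ k = h+1), if_neg (by omega : ¬ k = h+2), if_neg (by omega : ¬ k = h+3), hj]
    norm_num [Ez, hkr]
    try ring
  by_cases hc4 : k = h
  · have hj : j = 0 := by omega
    have hkr : (k:ℝ) = (h:ℝ) + (0:ℤ) := castk _ (by omega)
    rw [if_neg hc1, if_neg hc2, if_neg hc3, if_pos hc4, if_neg (by omega : ¬ k = h+1), if_neg (by omega : ¬ k = h+2), if_neg (by omega : ¬ k = h+3), hj]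
    norm_num [Ez, hkr]
    try ring
  by_cases hc5 : k = h+1
  · have hj : j = 1 := by omega
    have hkr : (k:ℝ) = (h:ℝ) + (1:ℤ) := castk _ (by omega)
    rw [if_neg hc1, if_neg hc2, if_neg hc3, if_neg hc4, if_pos hc5, if_neg (by omega : ¬ k = h+2), if_neg (by omega : ¬ k = h+3), hj]
    norm_num [Ez, hkr]
    try ring
  by_cases hc6 : k = h+2
  · have hj : j = 2 := by omega
    have hkr : (k:ℝ) = (h:ℝ) + (2:ℤ) := castk _ (by omega)
    rw [if_neg hc1, if_neg hc2, if_neg hc3, if_neg hc4, if_neg hc5, if_pos hc6, if_neg (by omega : ¬ k = h+3), hj]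
    norm_num [Ez, hkr]
    try ring
  by_cases hc7 : k = h+3
  · have hj : j = 3 := by omega
    have hkr : (k:ℝ) = (h:ℝ) + (3:ℤ) := castk _ (by omega)
    rw [if_neg hc1, if_neg hc2, if_neg hc3, if_neg hc4, if_neg hc5, if_neg hc6, if_pos hc7, hj]
    norm_num [Ez, hkr]
    try ring
  · have hout : j ≤ -4 ∨ 4 ≤ j := by omega
    rw [if_neg hc1, if_neg hc2, if_neg hc3, if_neg hc4, if_neg hc5, if_neg hc6, if_neg hc7,
      if_neg (by omega : ¬ (j = 0)), if_neg (by omega : ¬ (j = 1)), if_neg (by omega : ¬ (j = -1)), if_neg (by omega : ¬ ((j = -1 ∨ j = 0))), if_neg (by omega : ¬ (j - 1 = 0)), if_neg (by omega : ¬ (j + 1 = 0))]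
    norm_num [Ez]

lemma G_pmp (h k : ℕ) (hh : 3 ≤ h) (hk : k ≤ 2*h) :
    G h 1 (-1) 1 k = (if k = h-3 then (0) else 0) + (if k = h-2 then (0) else 0) + (if k = h-1 then ((h:ℝ)+3) else 0) + (if k = h then (2*(h:ℝ)+2) else 0) + (if k = h+1 then ((h:ℝ)+2) else 0) + (if k = h+2 then (0) else 0) + (if k = h+3 then (0) else 0) := by
  have hG : G h 1 (-1) 1 k =
      Ez (w 1 ((k:ℤ) - h) 0) (w (-1) ((k:ℤ) - h) 0)
      + Ez (w 1 ((k:ℤ) - h) 0) (w 1 ((k:ℤ) - h) 2)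
      + Ez (w 1 ((k:ℤ) - h) 0) (w 1 ((k:ℤ) - h) (-2))
      + (k:ℝ) * Ez (w 1 ((k:ℤ) - h) 0) (w 1 ((k:ℤ) - h - 1) 0)
      + (2*(h:ℝ) - (k:ℝ)) * Ez (w 1 ((k:ℤ) - h) 0) (w 1 ((k:ℤ) - h + 1) 0) := by
    rw [G]; norm_num
  rw [hG]
  simp only [w_1_m2, w_1_0, w_1_2, w_m1_m2, w_m1_0, w_m1_2]
  set j : ℤ := (k:ℤ) - h with hjdef
  by_cases hc1 : k = h-3
  · have hj : j = (-3) := by omega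
    have hkr : (k:ℝ) = (h:ℝ) + (-3:ℤ) := castk _ (by omega)
    rw [if_pos hc1, if_neg (by omega : ¬ k = h-2), if_neg (by omega : ¬ k = h-1), if_neg (by omega : ¬ k = h), if_neg (by omega : ¬ k = h+1), if_neg (by omega : ¬ k = h+2), if_neg (by omega : ¬ k = h+3), hj]
    norm_num [Ez, hkr]
    try ring
  by_cases hc2 : k = h-2
  · have hj : j = (-2) := by omega
    have hkr : (k:ℝ) = (h:ℝ) + (-2:ℤ) := castk _ (by omega)
    rw [if_neg hc1, if_pos hc2, if_neg (by omega : ¬ k = h-1), if_neg (by omega : ¬ k = h), if_neg (by omega : ¬ k = h+1), if_neg (by omega : ¬ k = h+2), if_neg (by omega : ¬ k = h+3), hj]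
    norm_num [Ez, hkr]
    try ring
  by_cases hc3 : k = h-1
  · have hj : j = (-1) := by omega
    have hkr : (k:ℝ) = (h:ℝ) + (-1:ℤ) := castk _ (by omega)
    rw [if_neg hc1, if_neg hc2, if_pos hc3, if_neg (by omega : ¬ k = h), if_neg (by omega : ¬ k = h+1), if_neg (by omega : ¬ k = h+2), if_neg (by omega : ¬ k = h+3), hj]
    norm_num [Ez, hkr]
    try ring
  by_cases hc4 : k = h
  · have hj : j = 0 := by omega
    have hkr : (k:ℝ) = (h:ℝ) + (0:ℤ) := castk _ (by omega)
    rw [if_neg hc1, if_neg hc2, if_neg hc3, if_pos hc4, if_neg (by omega : ¬ k = h+1), if_neg (by omega : ¬ k = h+2), if_neg (by omega : ¬ k = h+3), hj]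
    norm_num [Ez, hkr]
    try ring
  by_cases hc5 : k = h+1
  · have hj : j = 1 := by omega
    have hkr : (k:ℝ) = (h:ℝ) + (1:ℤ) := castk _ (by omega)
    rw [if_neg hc1, if_neg hc2, if_neg hc3, if_neg hc4, if_pos hc5, if_neg (by omega : ¬ k = h+2), if_neg (by omega : ¬ k = h+3), hj]
    norm_num [Ez, hkr]
    try ring
  by_cases hc6 : k = h+2
  · have hj : j = 2 := by omega
    have hkr : (k:ℝ) = (h:ℝ) + (2:ℤ) := castk _ (by omega)
    rw [if_neg hc1, if_neg hc2, if_neg hc3, if_neg hc4, if_neg hc5, if_pos hc6, if_neg (by omega : ¬ k = h+3), hj]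
    norm_num [Ez, hkr]
    try ring
  by_cases hc7 : k = h+3
  · have hj : j = 3 := by omega
    have hkr : (k:ℝ) = (h:ℝ) + (3:ℤ) := castk _ (by omega)
    rw [if_neg hc1, if_neg hc2, if_neg hc3, if_neg hc4, if_neg hc5, if_neg hc6, if_pos hc7, hj]
    norm_num [Ez, hkr]
    try ring
  · have hout : j ≤ -4 ∨ 4 ≤ j := by omega
    rw [if_neg hc1, if_neg hc2, if_neg hc3, if_neg hc4, if_neg hc5, if_neg hc6, if_neg hc7,
      if_neg (by omega : ¬ (j = 0)), if_neg (by omega : ¬ (j = 1)), if_neg (by omega : ¬ ((j = -1 ∨ j = 0))), if_neg (by omega : ¬ (j = -1)), if_neg (by omega : ¬ (j - 1 = 0)), if_neg (by omega : ¬ (j + 1 = 0))]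
    norm_num [Ez]

lemma G_pmm (h k : ℕ) (hh : 3 ≤ h) (hk : k ≤ 2*h) :
    G h 1 (-1) (-1) k = (if k = h-3 then (0) else 0) + (if k = h-2 then ((h:ℝ)+2) else 0) + (if k = h-1 then (2*(h:ℝ)+3) else 0) + (if k = h then ((h:ℝ)+3) else 0) + (if k = h+1 then (0) else 0) + (if k = h+2 then (0) else 0) + (if k = h+3 then (0) else 0) := by
  have hG : G h 1 (-1) (-1) k =
      Ez (w 1 ((k:ℤ) - h) (-2)) (w (-1) ((k:ℤ) - h) (-2))
      + Ez (w 1 ((k:ℤ) - h) (-2)) (w 1 ((k:ℤ) - h) 0)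
      + Ez (w 1 ((k:ℤ) - h) (-2)) (w 1 ((k:ℤ) - h) 0)
      + (k:ℝ) * Ez (w 1 ((k:ℤ) - h) (-2)) (w 1 ((k:ℤ) - h - 1) (-2))
      + (2*(h:ℝ) - (k:ℝ)) * Ez (w 1 ((k:ℤ) - h) (-2)) (w 1 ((k:ℤ) - h + 1) (-2)) := by
    rw [G]; norm_num
  rw [hG]
  simp only [w_1_m2, w_1_0, w_1_2, w_m1_m2, w_m1_0, w_m1_2]
  set j : ℤ := (k:ℤ) - h with hjdef
  by_cases hc1 : k = h-3
  · have hj : j = (-3) := by omega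
    have hkr : (k:ℝ) = (h:ℝ) + (-3:ℤ) := castk _ (by omega)
    rw [if_pos hc1, if_neg (by omega : ¬ k = h-2), if_neg (by omega : ¬ k = h-1), if_neg (by omega : ¬ k = h), if_neg (by omega : ¬ k = h+1), if_neg (by omega : ¬ k = h+2), if_neg (by omega : ¬ k = h+3), hj]
    norm_num [Ez, hkr]
    try ring
  by_cases hc2 : k = h-2
  · have hj : j = (-2) := by omega
    have hkr : (k:ℝ) = (h:ℝ) + (-2:ℤ) := castk _ (by omega)
    rw [if_neg hc1, if_pos hc2, if_neg (by omega : ¬ k = h-1), if_neg (by omega : ¬ k = h), if_neg (by omega : ¬ k = h+1), if_neg (by omega : ¬ k = h+2), if_neg (by omega : ¬ k = h+3), hj]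
    norm_num [Ez, hkr]
    try ring
  by_cases hc3 : k = h-1
  · have hj : j = (-1) := by omega
    have hkr : (k:ℝ) = (h:ℝ) + (-1:ℤ) := castk _ (by omega)
    rw [if_neg hc1, if_neg hc2, if_pos hc3, if_neg (by omega : ¬ k = h), if_neg (by omega : ¬ k = h+1), if_neg (by omega : ¬ k = h+2), if_neg (by omega : ¬ k = h+3), hj]
    norm_num [Ez, hkr]
    try ring
  by_cases hc4 : k = h
  · have hj : j = 0 := by omega
    have hkr : (k:ℝ) = (h:ℝ) + (0:ℤ) := castk _ (by omega)
    rw [if_neg hc1, if_neg hc2, if_neg hc3, if_pos hc4, if_neg (by omega : ¬ k = h+1), if_neg (by omega : ¬ k = h+2), if_neg (by omega : ¬ k = h+3), hj]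
    norm_num [Ez, hkr]
    try ring
  by_cases hc5 : k = h+1
  · have hj : j = 1 := by omega
    have hkr : (k:ℝ) = (h:ℝ) + (1:ℤ) := castk _ (by omega)
    rw [if_neg hc1, if_neg hc2, if_neg hc3, if_neg hc4, if_pos hc5, if_neg (by omega : ¬ k = h+2), if_neg (by omega : ¬ k = h+3), hj]
    norm_num [Ez, hkr]
    try ring
  by_cases hc6 : k = h+2
  · have hj : j = 2 := by omega
    have hkr : (k:ℝ) = (h:ℝ) + (2:ℤ) := castk _ (by omega)
    rw [if_neg hc1, if_neg hc2, if_neg hc3, if_neg hc4, if_neg hc5, if_pos hc6, if_neg (by omega : ¬ k = h+3), hj]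
    norm_num [Ez, hkr]
    try ring
  by_cases hc7 : k = h+3
  · have hj : j = 3 := by omega
    have hkr : (k:ℝ) = (h:ℝ) + (3:ℤ) := castk _ (by omega)
    rw [if_neg hc1, if_neg hc2, if_neg hc3, if_neg hc4, if_neg hc5, if_neg hc6, if_pos hc7, hj]
    norm_num [Ez, hkr]
    try ring
  · have hout : j ≤ -4 ∨ 4 ≤ j := by omega
    rw [if_neg hc1, if_neg hc2, if_neg hc3, if_neg hc4, if_neg hc5, if_neg hc6, if_neg hc7,
      if_neg (by omega : ¬ (j = -1)), if_neg (by omega : ¬ (j = 0)), if_neg (by omega : ¬ (j - 1 = -1)), if_neg (by omega : ¬ (j + 1 = -1))]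
    norm_num [Ez]

lemma G_mpp (h k : ℕ) (hh : 3 ≤ h) (hk : k ≤ 2*h) :
    G h (-1) 1 1 k = (if k = h-3 then (0) else 0) + (if k = h-2 then (0) else 0) + (if k = h-1 then ((h:ℝ)+2) else 0) + (if k = h then ((h:ℝ)+2) else 0) + (if k = h+1 then (1) else 0) + (if k = h+2 then ((h:ℝ)+1) else 0) + (if k = h+3 then ((h:ℝ)+3) else 0) := by
  have hG : G h (-1) 1 1 k =
      Ez (w (-1) ((k:ℤ) - h) 2) (w 1 ((k:ℤ) - h) 2)
      + Ez (w (-1) ((k:ℤ) - h) 2) (w (-1) ((k:ℤ) - h) 0)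
      + Ez (w (-1) ((k:ℤ) - h) 2) (w (-1) ((k:ℤ) - h) 0)
      + (k:ℝ) * Ez (w (-1) ((k:ℤ) - h) 2) (w (-1) ((k:ℤ) - h - 1) 2)
      + (2*(h:ℝ) - (k:ℝ)) * Ez (w (-1) ((k:ℤ) - h) 2) (w (-1) ((k:ℤ) - h + 1) 2) := by
    rw [G]; norm_num
  rw [hG]
  simp only [w_1_m2, w_1_0, w_1_2, w_m1_m2, w_m1_0, w_m1_2]
  set j : ℤ := (k:ℤ) - h with hjdef
  by_cases hc1 : k = h-3
  · have hj : j = (-3) := by omega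
    have hkr : (k:ℝ) = (h:ℝ) + (-3:ℤ) := castk _ (by omega)
    rw [if_pos hc1, if_neg (by omega : ¬ k = h-2), if_neg (by omega : ¬ k = h-1), if_neg (by omega : ¬ k = h), if_neg (by omega : ¬ k = h+1), if_neg (by omega : ¬ k = h+2), if_neg (by omega : ¬ k = h+3), hj]
    norm_num [Ez, hkr]
    try ring
  by_cases hc2 : k = h-2
  · have hj : j = (-2) := by omega
    have hkr : (k:ℝ) = (h:ℝ) + (-2:ℤ) := castk _ (by omega)
    rw [if_neg hc1, if_pos hc2, if_neg (by omega : ¬ k = h-1), if_neg (by omega : ¬ k = h), if_neg (by omega : ¬ k = h+1), if_neg (by omega : ¬ k = h+2), if_neg (by omega : ¬ k = h+3), hj]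
    norm_num [Ez, hkr]
    try ring
  by_cases hc3 : k = h-1
  · have hj : j = (-1) := by omega
    have hkr : (k:ℝ) = (h:ℝ) + (-1:ℤ) := castk _ (by omega)
    rw [if_neg hc1, if_neg hc2, if_pos hc3, if_neg (by omega : ¬ k = h), if_neg (by omega : ¬ k = h+1), if_neg (by omega : ¬ k = h+2), if_neg (by omega : ¬ k = h+3), hj]
    norm_num [Ez, hkr]
    try ring
  by_cases hc4 : k = h
  · have hj : j = 0 := by omega
    have hkr : (k:ℝ) = (h:ℝ) + (0:ℤ) := castk _ (by omega)
    rw [if_neg hc1, if_neg hc2, if_neg hc3, if_pos hc4, if_neg (by omega : ¬ k = h+1), if_neg (by omega : ¬ k = h+2), if_neg (by omega : ¬ k = h+3), hj]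
    norm_num [Ez, hkr]
    try ring
  by_cases hc5 : k = h+1
  · have hj : j = 1 := by omega
    have hkr : (k:ℝ) = (h:ℝ) + (1:ℤ) := castk _ (by omega)
    rw [if_neg hc1, if_neg hc2, if_neg hc3, if_neg hc4, if_pos hc5, if_neg (by omega : ¬ k = h+2), if_neg (by omega : ¬ k = h+3), hj]
    norm_num [Ez, hkr]
    try ring
  by_cases hc6 : k = h+2
  · have hj : j = 2 := by omega
    have hkr : (k:ℝ) = (h:ℝ) + (2:ℤ) := castk _ (by omega)
    rw [if_neg hc1, if_neg hc2, if_neg hc3, if_neg hc4, if_neg hc5, if_pos hc6, if_neg (by omega : ¬ k = h+3), hj]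
    norm_num [Ez, hkr]
    try ring
  by_cases hc7 : k = h+3
  · have hj : j = 3 := by omega
    have hkr : (k:ℝ) = (h:ℝ) + (3:ℤ) := castk _ (by omega)
    rw [if_neg hc1, if_neg hc2, if_neg hc3, if_neg hc4, if_neg hc5, if_neg hc6, if_pos hc7, hj]
    norm_num [Ez, hkr]
    try ring
  · have hout : j ≤ -4 ∨ 4 ≤ j := by omega
    rw [if_neg hc1, if_neg hc2, if_neg hc3, if_neg hc4, if_neg hc5, if_neg hc6, if_neg hc7,
      if_neg (by omega : ¬ ((j = 0 ∨ j = 1 ∨ j = 2))), if_neg (by omega : ¬ ((j = -1 ∨ j = 0))), if_neg (by omega : ¬ (j = 1)), if_neg (by omega : ¬ ((j - 1 = 0 ∨ j - 1 = 1 ∨ j - 1 = 2))), if_neg (by omega : ¬ ((j + 1 = 0 ∨ j + 1 = 1 ∨ j + 1 = 2)))]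
    norm_num [Ez]

lemma G_mpm (h k : ℕ) (hh : 3 ≤ h) (hk : k ≤ 2*h) :
    G h (-1) 1 (-1) k = (if k = h-3 then (0) else 0) + (if k = h-2 then (0) else 0) + (if k = h-1 then (0) else 0) + (if k = h then ((h:ℝ)+3) else 0) + (if k = h+1 then (2*(h:ℝ)+2) else 0) + (if k = h+2 then ((h:ℝ)+3) else 0) + (if k = h+3 then (0) else 0) := by
  have hG : G h (-1) 1 (-1) k =
      Ez (w (-1) ((k:ℤ) - h) 0) (w 1 ((k:ℤ) - h) 0)
      + Ez (w (-1) ((k:ℤ) - h) 0) (w (-1) ((k:ℤ) - h) (-2))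
      + Ez (w (-1) ((k:ℤ) - h) 0) (w (-1) ((k:ℤ) - h) 2)
      + (k:ℝ) * Ez (w (-1) ((k:ℤ) - h) 0) (w (-1) ((k:ℤ) - h - 1) 0)
      + (2*(h:ℝ) - (k:ℝ)) * Ez (w (-1) ((k:ℤ) - h) 0) (w (-1) ((k:ℤ) - h + 1) 0) := by
    rw [G]; norm_num
  rw [hG]
  simp only [w_1_m2, w_1_0, w_1_2, w_m1_m2, w_m1_0, w_m1_2]
  set j : ℤ := (k:ℤ) - h with hjdef
  by_cases hc1 : k = h-3
  · have hj : j = (-3) := by omega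
    have hkr : (k:ℝ) = (h:ℝ) + (-3:ℤ) := castk _ (by omega)
    rw [if_pos hc1, if_neg (by omega : ¬ k = h-2), if_neg (by omega : ¬ k = h-1), if_neg (by omega : ¬ k = h), if_neg (by omega : ¬ k = h+1), if_neg (by omega : ¬ k = h+2), if_neg (by omega : ¬ k = h+3), hj]
    norm_num [Ez, hkr]
    try ring
  by_cases hc2 : k = h-2
  · have hj : j = (-2) := by omega
    have hkr : (k:ℝ) = (h:ℝ) + (-2:ℤ) := castk _ (by omega)
    rw [if_neg hc1, if_pos hc2, if_neg (by omega : ¬ k = h-1), if_neg (by omega : ¬ k = h), if_neg (by omega : ¬ k = h+1), if_neg (by omega : ¬ k = h+2), if_neg (by omega : ¬ k = h+3), hj]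
    norm_num [Ez, hkr]
    try ring
  by_cases hc3 : k = h-1
  · have hj : j = (-1) := by omega
    have hkr : (k:ℝ) = (h:ℝ) + (-1:ℤ) := castk _ (by omega)
    rw [if_neg hc1, if_neg hc2, if_pos hc3, if_neg (by omega : ¬ k = h), if_neg (by omega : ¬ k = h+1), if_neg (by omega : ¬ k = h+2), if_neg (by omega : ¬ k = h+3), hj]
    norm_num [Ez, hkr]
    try ring
  by_cases hc4 : k = h
  · have hj : j = 0 := by omega
    have hkr : (k:ℝ) = (h:ℝ) + (0:ℤ) := castk _ (by omega)
    rw [if_neg hc1, if_neg hc2, if_neg hc3, if_pos hc4, if_neg (by omega : ¬ k = h+1), if_neg (by omega : ¬ k = h+2), if_neg (by omega : ¬ k = h+3), hj]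
    norm_num [Ez, hkr]
    try ring
  by_cases hc5 : k = h+1
  · have hj : j = 1 := by omega
    have hkr : (k:ℝ) = (h:ℝ) + (1:ℤ) := castk _ (by omega)
    rw [if_neg hc1, if_neg hc2, if_neg hc3, if_neg hc4, if_pos hc5, if_neg (by omega : ¬ k = h+2), if_neg (by omega : ¬ k = h+3), hj]
    norm_num [Ez, hkr]
    try ring
  by_cases hc6 : k = h+2
  · have hj : j = 2 := by omega
    have hkr : (k:ℝ) = (h:ℝ) + (2:ℤ) := castk _ (by omega)
    rw [if_neg hc1, if_neg hc2, if_neg hc3, if_neg hc4, if_neg hc5, if_pos hc6, if_neg (by omega : ¬ k = h+3), hj]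
    norm_num [Ez, hkr]
    try ring
  by_cases hc7 : k = h+3
  · have hj : j = 3 := by omega
    have hkr : (k:ℝ) = (h:ℝ) + (3:ℤ) := castk _ (by omega)
    rw [if_neg hc1, if_neg hc2, if_neg hc3, if_neg hc4, if_neg hc5, if_neg hc6, if_pos hc7, hj]
    norm_num [Ez, hkr]
    try ring
  · have hout : j ≤ -4 ∨ 4 ≤ j := by omega
    rw [if_neg hc1, if_neg hc2, if_neg hc3, if_neg hc4, if_neg hc5, if_neg hc6, if_neg hc7,
      if_neg (by omega : ¬ (j = 1)), if_neg (by omega : ¬ (j = 0)), if_neg (by omega : ¬ ((j = 0 ∨ j = 1 ∨ j = 2))), if_neg (by omega : ¬ (j - 1 = 1)), if_neg (by omega : ¬ (j + 1 = 1))]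
    norm_num [Ez]

lemma G_mmp (h k : ℕ) (hh : 3 ≤ h) (hk : k ≤ 2*h) :
    G h (-1) (-1) 1 k = (if k = h-3 then (0) else 0) + (if k = h-2 then (0) else 0) + (if k = h-1 then (0) else 0) + (if k = h then ((h:ℝ)+3) else 0) + (if k = h+1 then (2*(h:ℝ)+2) else 0) + (if k = h+2 then ((h:ℝ)+3) else 0) + (if k = h+3 then (0) else 0) := by
  have hG : G h (-1) (-1) 1 k =
      Ez (w (-1) ((k:ℤ) - h) 0) (w 1 ((k:ℤ) - h) 0)
      + Ez (w (-1) ((k:ℤ) - h) 0) (w (-1) ((k:ℤ) - h) 2)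
      + Ez (w (-1) ((k:ℤ) - h) 0) (w (-1) ((k:ℤ) - h) (-2))
      + (k:ℝ) * Ez (w (-1) ((k:ℤ) - h) 0) (w (-1) ((k:ℤ) - h - 1) 0)
      + (2*(h:ℝ) - (k:ℝ)) * Ez (w (-1) ((k:ℤ) - h) 0) (w (-1) ((k:ℤ) - h + 1) 0) := by
    rw [G]; norm_num
  rw [hG]
  simp only [w_1_m2, w_1_0, w_1_2, w_m1_m2, w_m1_0, w_m1_2]
  set j : ℤ := (k:ℤ) - h with hjdef
  by_cases hc1 : k = h-3
  · have hj : j = (-3) := by omega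
    have hkr : (k:ℝ) = (h:ℝ) + (-3:ℤ) := castk _ (by omega)
    rw [if_pos hc1, if_neg (by omega : ¬ k = h-2), if_neg (by omega : ¬ k = h-1), if_neg (by omega : ¬ k = h), if_neg (by omega : ¬ k = h+1), if_neg (by omega : ¬ k = h+2), if_neg (by omega : ¬ k = h+3), hj]
    norm_num [Ez, hkr]
    try ring
  by_cases hc2 : k = h-2
  · have hj : j = (-2) := by omega
    have hkr : (k:ℝ) = (h:ℝ) + (-2:ℤ) := castk _ (by omega)
    rw [if_neg hc1, if_pos hc2, if_neg (by omega : ¬ k = h-1), if_neg (by omega : ¬ k = h), if_neg (by omega : ¬ k = h+1), if_neg (by omega : ¬ k = h+2), if_neg (by omega : ¬ k = h+3), hj]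
    norm_num [Ez, hkr]
    try ring
  by_cases hc3 : k = h-1
  · have hj : j = (-1) := by omega
    have hkr : (k:ℝ) = (h:ℝ) + (-1:ℤ) := castk _ (by omega)
    rw [if_neg hc1, if_neg hc2, if_pos hc3, if_neg (by omega : ¬ k = h), if_neg (by omega : ¬ k = h+1), if_neg (by omega : ¬ k = h+2), if_neg (by omega : ¬ k = h+3), hj]
    norm_num [Ez, hkr]
    try ring
  by_cases hc4 : k = h
  · have hj : j = 0 := by omega
    have hkr : (k:ℝ) = (h:ℝ) + (0:ℤ) := castk _ (by omega)
    rw [if_neg hc1, if_neg hc2, if_neg hc3, if_pos hc4, if_neg (by omega : ¬ k = h+1), if_neg (by omega : ¬ k = h+2), if_neg (by omega : ¬ k = h+3), hj]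
    norm_num [Ez, hkr]
    try ring
  by_cases hc5 : k = h+1
  · have hj : j = 1 := by omega
    have hkr : (k:ℝ) = (h:ℝ) + (1:ℤ) := castk _ (by omega)
    rw [if_neg hc1, if_neg hc2, if_neg hc3, if_neg hc4, if_pos hc5, if_neg (by omega : ¬ k = h+2), if_neg (by omega : ¬ k = h+3), hj]
    norm_num [Ez, hkr]
    try ring
  by_cases hc6 : k = h+2
  · have hj : j = 2 := by omega
    have hkr : (k:ℝ) = (h:ℝ) + (2:ℤ) := castk _ (by omega)
    rw [if_neg hc1, if_neg hc2, if_neg hc3, if_neg hc4, if_neg hc5, if_pos hc6, if_neg (by omega : ¬ k = h+3), hj]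
    norm_num [Ez, hkr]
    try ring
  by_cases hc7 : k = h+3
  · have hj : j = 3 := by omega
    have hkr : (k:ℝ) = (h:ℝ) + (3:ℤ) := castk _ (by omega)
    rw [if_neg hc1, if_neg hc2, if_neg hc3, if_neg hc4, if_neg hc5, if_neg hc6, if_pos hc7, hj]
    norm_num [Ez, hkr]
    try ring
  · have hout : j ≤ -4 ∨ 4 ≤ j := by omega
    rw [if_neg hc1, if_neg hc2, if_neg hc3, if_neg hc4, if_neg hc5, if_neg hc6, if_neg hc7,
      if_neg (by omega : ¬ (j = 1)), if_neg (by omega : ¬ (j = 0)), if_neg (by omega : ¬ ((j = 0 ∨ j = 1 ∨ j = 2))), if_neg (by omega : ¬ (j - 1 = 1)), if_neg (by omega : ¬ (j + 1 = 1))]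
    norm_num [Ez]

lemma G_mmm (h k : ℕ) (hh : 3 ≤ h) (hk : k ≤ 2*h) :
    G h (-1) (-1) (-1) k = (if k = h-3 then (0) else 0) + (if k = h-2 then (0) else 0) + (if k = h-1 then ((h:ℝ)+2) else 0) + (if k = h then (2*(h:ℝ)+3) else 0) + (if k = h+1 then ((h:ℝ)+3) else 0) + (if k = h+2 then (0) else 0) + (if k = h+3 then (0) else 0) := by
  have hG : G h (-1) (-1) (-1) k =
      Ez (w (-1) ((k:ℤ) - h) (-2)) (w 1 ((k:ℤ) - h) (-2))
      + Ez (w (-1) ((k:ℤ) - h) (-2)) (w (-1) ((k:ℤ) - h) 0)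
      + Ez (w (-1) ((k:ℤ) - h) (-2)) (w (-1) ((k:ℤ) - h) 0)
      + (k:ℝ) * Ez (w (-1) ((k:ℤ) - h) (-2)) (w (-1) ((k:ℤ) - h - 1) (-2))
      + (2*(h:ℝ) - (k:ℝ)) * Ez (w (-1) ((k:ℤ) - h) (-2)) (w (-1) ((k:ℤ) - h + 1) (-2)) := by
    rw [G]; norm_num
  rw [hG]
  simp only [w_1_m2, w_1_0, w_1_2, w_m1_m2, w_m1_0, w_m1_2]
  set j : ℤ := (k:ℤ) - h with hjdef
  by_cases hc1 : k = h-3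
  · have hj : j = (-3) := by omega
    have hkr : (k:ℝ) = (h:ℝ) + (-3:ℤ) := castk _ (by omega)
    rw [if_pos hc1, if_neg (by omega : ¬ k = h-2), if_neg (by omega : ¬ k = h-1), if_neg (by omega : ¬ k = h), if_neg (by omega : ¬ k = h+1), if_neg (by omega : ¬ k = h+2), if_neg (by omega : ¬ k = h+3), hj]
    norm_num [Ez, hkr]
    try ring
  by_cases hc2 : k = h-2
  · have hj : j = (-2) := by omega
    have hkr : (k:ℝ) = (h:ℝ) + (-2:ℤ) := castk _ (by omega)
    rw [if_neg hc1, if_pos hc2, if_neg (by omega : ¬ k = h-1), if_neg (by omega : ¬ k = h), if_neg (by omega : ¬ k = h+1), if_neg (by omega : ¬ k = h+2), if_neg (by omega : ¬ k = h+3), hj]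
    norm_num [Ez, hkr]
    try ring
  by_cases hc3 : k = h-1
  · have hj : j = (-1) := by omega
    have hkr : (k:ℝ) = (h:ℝ) + (-1:ℤ) := castk _ (by omega)
    rw [if_neg hc1, if_neg hc2, if_pos hc3, if_neg (by omega : ¬ k = h), if_neg (by omega : ¬ k = h+1), if_neg (by omega : ¬ k = h+2), if_neg (by omega : ¬ k = h+3), hj]
    norm_num [Ez, hkr]
    try ring
  by_cases hc4 : k = h
  · have hj : j = 0 := by omega
    have hkr : (k:ℝ) = (h:ℝ) + (0:ℤ) := castk _ (by omega)
    rw [if_neg hc1, if_neg hc2, if_neg hc3, if_pos hc4, if_neg (by omega : ¬ k = h+1), if_neg (by omega : ¬ k = h+2), if_neg (by omega : ¬ k = h+3), hj]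
    norm_num [Ez, hkr]
    try ring
  by_cases hc5 : k = h+1
  · have hj : j = 1 := by omega
    have hkr : (k:ℝ) = (h:ℝ) + (1:ℤ) := castk _ (by omega)
    rw [if_neg hc1, if_neg hc2, if_neg hc3, if_neg hc4, if_pos hc5, if_neg (by omega : ¬ k = h+2), if_neg (by omega : ¬ k = h+3), hj]
    norm_num [Ez, hkr]
    try ring
  by_cases hc6 : k = h+2
  · have hj : j = 2 := by omega
    have hkr : (k:ℝ) = (h:ℝ) + (2:ℤ) := castk _ (by omega)
    rw [if_neg hc1, if_neg hc2, if_neg hc3, if_neg hc4, if_neg hc5, if_pos hc6, if_neg (by omega : ¬ k = h+3), hj]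
    norm_num [Ez, hkr]
    try ring
  by_cases hc7 : k = h+3
  · have hj : j = 3 := by omega
    have hkr : (k:ℝ) = (h:ℝ) + (3:ℤ) := castk _ (by omega)
    rw [if_neg hc1, if_neg hc2, if_neg hc3, if_neg hc4, if_neg hc5, if_neg hc6, if_pos hc7, hj]
    norm_num [Ez, hkr]
    try ring
  · have hout : j ≤ -4 ∨ 4 ≤ j := by omega
    rw [if_neg hc1, if_neg hc2, if_neg hc3, if_neg hc4, if_neg hc5, if_neg hc6, if_neg hc7,
      if_neg (by omega : ¬ (j = 0)), if_neg (by omega : ¬ (j = -1)), if_neg (by omega : ¬ (j = 1)), if_neg (by omega : ¬ (j - 1 = 0)), if_neg (by omega : ¬ (j + 1 = 0))]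
    norm_num [Ez]
lemma sum_choose_ite (m k0 : ℕ) (hk0 : k0 ≤ m) (c : ℝ) :
    ∑ k ∈ Finset.range (m+1), (m.choose k : ℝ) * (if k = k0 then c else 0)
      = (m.choose k0 : ℝ) * c := by
  simp_rw [mul_ite, mul_zero]
  rw [Finset.sum_ite_eq' (Finset.range (m+1)) k0 (fun k => (m.choose k:ℝ)*c),
    if_pos (Finset.mem_range.2 (by omega))]


lemma S_ppp (h : ℕ) (hh : 3 ≤ h) :
    ∑ k ∈ Finset.range (2*h+1), (((2*h).choose k : ℝ)) * G h 1 1 1 k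
      = ((2*h).choose (h-3) : ℝ) * (0) + ((2*h).choose (h-2) : ℝ) * ((h:ℝ)+2) + ((2*h).choose (h-1) : ℝ) * ((h:ℝ)+2) + ((2*h).choose (h) : ℝ) * ((h:ℝ)) + ((2*h).choose (h+1) : ℝ) * ((h:ℝ)+2) + ((2*h).choose (h+2) : ℝ) * (1) + ((2*h).choose (h+3) : ℝ) * (0) := by
  rw [Finset.sum_congr rfl (fun k hk =>
    by rw [G_ppp h k hh (by have := Finset.mem_range.1 hk; omega)])]
  simp only [mul_add]
  rw [Finset.sum_add_distrib, Finset.sum_add_distrib, Finset.sum_add_distrib,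
    Finset.sum_add_distrib, Finset.sum_add_distrib, Finset.sum_add_distrib,
    sum_choose_ite (2*h) (h-3) (by omega) (0), sum_choose_ite (2*h) (h-2) (by omega) ((h:ℝ)+2), sum_choose_ite (2*h) (h-1) (by omega) ((h:ℝ)+2), sum_choose_ite (2*h) (h) (by omega) ((h:ℝ)), sum_choose_ite (2*h) (h+1) (by omega) ((h:ℝ)+2), sum_choose_ite (2*h) (h+2) (by omega) (1), sum_choose_ite (2*h) (h+3) (by omega) (0)]
  ring

lemma S_ppm (h : ℕ) (hh : 3 ≤ h) :
    ∑ k ∈ Finset.range (2*h+1), (((2*h).choose k : ℝ)) * G h 1 1 (-1) k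
      = ((2*h).choose (h-3) : ℝ) * (0) + ((2*h).choose (h-2) : ℝ) * (0) + ((2*h).choose (h-1) : ℝ) * ((h:ℝ)+3) + ((2*h).choose (h) : ℝ) * (2*(h:ℝ)+2) + ((2*h).choose (h+1) : ℝ) * ((h:ℝ)+2) + ((2*h).choose (h+2) : ℝ) * (0) + ((2*h).choose (h+3) : ℝ) * (0) := by
  rw [Finset.sum_congr rfl (fun k hk =>
    by rw [G_ppm h k hh (by have := Finset.mem_range.1 hk; omega)])]
  simp only [mul_add]
  rw [Finset.sum_add_distrib, Finset.sum_add_distrib, Finset.sum_add_distrib,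
    Finset.sum_add_distrib, Finset.sum_add_distrib, Finset.sum_add_distrib,
    sum_choose_ite (2*h) (h-3) (by omega) (0), sum_choose_ite (2*h) (h-2) (by omega) (0), sum_choose_ite (2*h) (h-1) (by omega) ((h:ℝ)+3), sum_choose_ite (2*h) (h) (by omega) (2*(h:ℝ)+2), sum_choose_ite (2*h) (h+1) (by omega) ((h:ℝ)+2), sum_choose_ite (2*h) (h+2) (by omega) (0), sum_choose_ite (2*h) (h+3) (by omega) (0)]
  ring

lemma S_pmp (h : ℕ) (hh : 3 ≤ h) :
    ∑ k ∈ Finset.range (2*h+1), (((2*h).choose k : ℝ)) * G h 1 (-1) 1 k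
      = ((2*h).choose (h-3) : ℝ) * (0) + ((2*h).choose (h-2) : ℝ) * (0) + ((2*h).choose (h-1) : ℝ) * ((h:ℝ)+3) + ((2*h).choose (h) : ℝ) * (2*(h:ℝ)+2) + ((2*h).choose (h+1) : ℝ) * ((h:ℝ)+2) + ((2*h).choose (h+2) : ℝ) * (0) + ((2*h).choose (h+3) : ℝ) * (0) := by
  rw [Finset.sum_congr rfl (fun k hk =>
    by rw [G_pmp h k hh (by have := Finset.mem_range.1 hk; omega)])]
  simp only [mul_add]
  rw [Finset.sum_add_distrib, Finset.sum_add_distrib, Finset.sum_add_distrib,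
    Finset.sum_add_distrib, Finset.sum_add_distrib, Finset.sum_add_distrib,
    sum_choose_ite (2*h) (h-3) (by omega) (0), sum_choose_ite (2*h) (h-2) (by omega) (0), sum_choose_ite (2*h) (h-1) (by omega) ((h:ℝ)+3), sum_choose_ite (2*h) (h) (by omega) (2*(h:ℝ)+2), sum_choose_ite (2*h) (h+1) (by omega) ((h:ℝ)+2), sum_choose_ite (2*h) (h+2) (by omega) (0), sum_choose_ite (2*h) (h+3) (by omega) (0)]
  ring

lemma S_pmm (h : ℕ) (hh : 3 ≤ h) :
    ∑ k ∈ Finset.range (2*h+1), (((2*h).choose k : ℝ)) * G h 1 (-1) (-1) k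
      = ((2*h).choose (h-3) : ℝ) * (0) + ((2*h).choose (h-2) : ℝ) * ((h:ℝ)+2) + ((2*h).choose (h-1) : ℝ) * (2*(h:ℝ)+3) + ((2*h).choose (h) : ℝ) * ((h:ℝ)+3) + ((2*h).choose (h+1) : ℝ) * (0) + ((2*h).choose (h+2) : ℝ) * (0) + ((2*h).choose (h+3) : ℝ) * (0) := by
  rw [Finset.sum_congr rfl (fun k hk =>
    by rw [G_pmm h k hh (by have := Finset.mem_range.1 hk; omega)])]
  simp only [mul_add]
  rw [Finset.sum_add_distrib, Finset.sum_add_distrib, Finset.sum_add_distrib,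
    Finset.sum_add_distrib, Finset.sum_add_distrib, Finset.sum_add_distrib,
    sum_choose_ite (2*h) (h-3) (by omega) (0), sum_choose_ite (2*h) (h-2) (by omega) ((h:ℝ)+2), sum_choose_ite (2*h) (h-1) (by omega) (2*(h:ℝ)+3), sum_choose_ite (2*h) (h) (by omega) ((h:ℝ)+3), sum_choose_ite (2*h) (h+1) (by omega) (0), sum_choose_ite (2*h) (h+2) (by omega) (0), sum_choose_ite (2*h) (h+3) (by omega) (0)]
  ring

lemma S_mpp (h : ℕ) (hh : 3 ≤ h) :
    ∑ k ∈ Finset.range (2*h+1), (((2*h).choose k : ℝ)) * G h (-1) 1 1 k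
      = ((2*h).choose (h-3) : ℝ) * (0) + ((2*h).choose (h-2) : ℝ) * (0) + ((2*h).choose (h-1) : ℝ) * ((h:ℝ)+2) + ((2*h).choose (h) : ℝ) * ((h:ℝ)+2) + ((2*h).choose (h+1) : ℝ) * (1) + ((2*h).choose (h+2) : ℝ) * ((h:ℝ)+1) + ((2*h).choose (h+3) : ℝ) * ((h:ℝ)+3) := by
  rw [Finset.sum_congr rfl (fun k hk =>
    by rw [G_mpp h k hh (by have := Finset.mem_range.1 hk; omega)])]
  simp only [mul_add]
  rw [Finset.sum_add_distrib, Finset.sum_add_distrib, Finset.sum_add_distrib,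
    Finset.sum_add_distrib, Finset.sum_add_distrib, Finset.sum_add_distrib,
    sum_choose_ite (2*h) (h-3) (by omega) (0), sum_choose_ite (2*h) (h-2) (by omega) (0), sum_choose_ite (2*h) (h-1) (by omega) ((h:ℝ)+2), sum_choose_ite (2*h) (h) (by omega) ((h:ℝ)+2), sum_choose_ite (2*h) (h+1) (by omega) (1), sum_choose_ite (2*h) (h+2) (by omega) ((h:ℝ)+1), sum_choose_ite (2*h) (h+3) (by omega) ((h:ℝ)+3)]
  ring

lemma S_mpm (h : ℕ) (hh : 3 ≤ h) :
    ∑ k ∈ Finset.range (2*h+1), (((2*h).choose k : ℝ)) * G h (-1) 1 (-1) k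
      = ((2*h).choose (h-3) : ℝ) * (0) + ((2*h).choose (h-2) : ℝ) * (0) + ((2*h).choose (h-1) : ℝ) * (0) + ((2*h).choose (h) : ℝ) * ((h:ℝ)+3) + ((2*h).choose (h+1) : ℝ) * (2*(h:ℝ)+2) + ((2*h).choose (h+2) : ℝ) * ((h:ℝ)+3) + ((2*h).choose (h+3) : ℝ) * (0) := by
  rw [Finset.sum_congr rfl (fun k hk =>
    by rw [G_mpm h k hh (by have := Finset.mem_range.1 hk; omega)])]
  simp only [mul_add]
  rw [Finset.sum_add_distrib, Finset.sum_add_distrib, Finset.sum_add_distrib,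
    Finset.sum_add_distrib, Finset.sum_add_distrib, Finset.sum_add_distrib,
    sum_choose_ite (2*h) (h-3) (by omega) (0), sum_choose_ite (2*h) (h-2) (by omega) (0), sum_choose_ite (2*h) (h-1) (by omega) (0), sum_choose_ite (2*h) (h) (by omega) ((h:ℝ)+3), sum_choose_ite (2*h) (h+1) (by omega) (2*(h:ℝ)+2), sum_choose_ite (2*h) (h+2) (by omega) ((h:ℝ)+3), sum_choose_ite (2*h) (h+3) (by omega) (0)]
  ring

lemma S_mmp (h : ℕ) (hh : 3 ≤ h) :
    ∑ k ∈ Finset.range (2*h+1), (((2*h).choose k : ℝ)) * G h (-1) (-1) 1 k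
      = ((2*h).choose (h-3) : ℝ) * (0) + ((2*h).choose (h-2) : ℝ) * (0) + ((2*h).choose (h-1) : ℝ) * (0) + ((2*h).choose (h) : ℝ) * ((h:ℝ)+3) + ((2*h).choose (h+1) : ℝ) * (2*(h:ℝ)+2) + ((2*h).choose (h+2) : ℝ) * ((h:ℝ)+3) + ((2*h).choose (h+3) : ℝ) * (0) := by
  rw [Finset.sum_congr rfl (fun k hk =>
    by rw [G_mmp h k hh (by have := Finset.mem_range.1 hk; omega)])]
  simp only [mul_add]
  rw [Finset.sum_add_distrib, Finset.sum_add_distrib, Finset.sum_add_distrib,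
    Finset.sum_add_distrib, Finset.sum_add_distrib, Finset.sum_add_distrib,
    sum_choose_ite (2*h) (h-3) (by omega) (0), sum_choose_ite (2*h) (h-2) (by omega) (0), sum_choose_ite (2*h) (h-1) (by omega) (0), sum_choose_ite (2*h) (h) (by omega) ((h:ℝ)+3), sum_choose_ite (2*h) (h+1) (by omega) (2*(h:ℝ)+2), sum_choose_ite (2*h) (h+2) (by omega) ((h:ℝ)+3), sum_choose_ite (2*h) (h+3) (by omega) (0)]
  ring

lemma S_mmm (h : ℕ) (hh : 3 ≤ h) :
    ∑ k ∈ Finset.range (2*h+1), (((2*h).choose k : ℝ)) * G h (-1) (-1) (-1) k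
      = ((2*h).choose (h-3) : ℝ) * (0) + ((2*h).choose (h-2) : ℝ) * (0) + ((2*h).choose (h-1) : ℝ) * ((h:ℝ)+2) + ((2*h).choose (h) : ℝ) * (2*(h:ℝ)+3) + ((2*h).choose (h+1) : ℝ) * ((h:ℝ)+3) + ((2*h).choose (h+2) : ℝ) * (0) + ((2*h).choose (h+3) : ℝ) * (0) := by
  rw [Finset.sum_congr rfl (fun k hk =>
    by rw [G_mmm h k hh (by have := Finset.mem_range.1 hk; omega)])]
  simp only [mul_add]
  rw [Finset.sum_add_distrib, Finset.sum_add_distrib, Finset.sum_add_distrib,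
    Finset.sum_add_distrib, Finset.sum_add_distrib, Finset.sum_add_distrib,
    sum_choose_ite (2*h) (h-3) (by omega) (0), sum_choose_ite (2*h) (h-2) (by omega) (0), sum_choose_ite (2*h) (h-1) (by omega) ((h:ℝ)+2), sum_choose_ite (2*h) (h) (by omega) (2*(h:ℝ)+3), sum_choose_ite (2*h) (h+1) (by omega) ((h:ℝ)+3), sum_choose_ite (2*h) (h+2) (by omega) (0), sum_choose_ite (2*h) (h+3) (by omega) (0)]
  ring

lemma choose_symm_sub (h j : ℕ) (hj : j ≤ h) : (2*h).choose (h-j) = (2*h).choose (h+j) := by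
  rw [show h - j = 2*h - (h+j) by omega]
  exact Nat.choose_symm (by omega)

lemma total_sum (h : ℕ) (hh : 3 ≤ h) :
    (∑ a ∈ ({-1,1} : Finset ℤ), ∑ s ∈ ({-1,1} : Finset ℤ), ∑ t ∈ ({-1,1} : Finset ℤ),
      ∑ k ∈ Finset.range (2*h+1), (((2*h).choose k : ℝ)) * G h a s t k)
    = ((2*h).choose h : ℝ) * (11*(h:ℝ)+18) + ((2*h).choose (h+1) : ℝ) * (15*(h:ℝ)+29)
      + ((2*h).choose (h+2) : ℝ) * (5*(h:ℝ)+12) + ((2*h).choose (h+3) : ℝ) * ((h:ℝ)+3) := by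
  have hne : (-1 : ℤ) ≠ 1 := by decide
  rw [Finset.sum_pair hne, Finset.sum_pair hne, Finset.sum_pair hne,
    Finset.sum_pair hne, Finset.sum_pair hne, Finset.sum_pair hne, Finset.sum_pair hne]
  rw [S_mmm h hh, S_mmp h hh, S_mpm h hh, S_mpp h hh,
    S_pmm h hh, S_pmp h hh, S_ppm h hh, S_ppp h hh]
  rw [choose_symm_sub h 1 (by omega), choose_symm_sub h 2 (by omega),
    choose_symm_sub h 3 (by omega)]
  ring

lemma totalInf_eq {n : ℕ} (hn : 9 ≤ n) (h : ℕ) (hh3 : 3 ≤ h) (hh : n - 3 = 2*h) (h5 : 5 ≤ n)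
    (f : (Fin n → ℤ) → ℤ) (hf : ∀ x ∈ cube (Fin n), f x = sgn (argGL h5 x)) :
    totalInf f * 2^n
      = ((2*h).choose h : ℝ) * (11*(h:ℝ)+18) + ((2*h).choose (h+1) : ℝ) * (15*(h:ℝ)+29)
      + ((2*h).choose (h+2) : ℝ) * (5*(h:ℝ)+12) + ((2*h).choose (h+3) : ℝ) * ((h:ℝ)+3) := by
  have hcard : (((cube (Fin n)).card : ℕ) : ℝ) = 2^n := by
    rw [card_cube, Fintype.card_fin]; push_cast; ring
  unfold totalInf coordInf
  rw [← Finset.sum_div, hcard, div_mul_cancel₀ _ (by positivity : (2:ℝ)^n ≠ 0),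
    Finset.sum_comm]
  have h1 : ∀ x ∈ cube (Fin n), (∑ i : Fin n, if f x ≠ f (flipAt x i) then (1:ℝ) else 0)
      = G h (x ⟨0, by omega⟩) (x ⟨n-2, by omega⟩) (x ⟨n-1, by omega⟩) (cnt1 x) :=
    fun x hx => sum_ind hn h hh h5 f hf hx
  have hEE : ∀ (p : Prop) (d1 d2 : Decidable p), (@ite ℝ p d1 1 0) = (@ite ℝ p d2 1 0) := by
    intro p d1 d2
    congr 1
  refine (Finset.sum_congr rfl (fun x hx => Eq.trans
    (Finset.sum_congr rfl (fun i _ => hEE _ _ _)) (h1 x hx))).trans ?_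
  refine (cube_sum_eq hn (fun a s t k => G h a s t k)).trans ?_
  rw [show n - 2 = 2*h+1 by omega, hh]
  exact total_sum h hh3


end GLAux

open GLAux

/-- For odd `n ≥ 9`, the ratio of the total influence of the counterexample QTF `f_n` to the
Gotsman–Linial bound `I_GL(n,2) = n · 2^{1-n} · C(n,(n-1)/2)` equals
`1 + 7/(32n) - 3/(32(n-2)) + 3/(16n²)`. -/
theorem counterexample_influence_ratio {n : ℕ} (hodd : Odd n) (hn : 9 ≤ n)
    (f : (Fin n → ℤ) → ℤ)
    (hf : ∀ x ∈ cube (Fin n), f x = sgn (argGL (by omega) x)) :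
    totalInf f / ((n : ℝ) * 2 * (n.choose ((n - 1) / 2) : ℝ) / 2 ^ n) =
      1 + 7 / (32 * (n : ℝ)) - 3 / (32 * ((n : ℝ) - 2)) + 3 / (16 * (n : ℝ) ^ 2) := by
  obtain ⟨r, hr⟩ := hodd
  set h : ℕ := r - 1 with hhdef
  have hh3 : 3 ≤ h := by omega
  have hn3 : n - 3 = 2*h := by omega
  have hne : n = 2*h + 3 := by omega
  have hform := totalInf_eq hn h hh3 hn3 (by omega) f hf
  -- binomial identities
  have hq : (n-1)/2 = h+1 := by omega
  have hchoose : n.choose ((n-1)/2) = (2*h+3).choose (h+1) := by rw [hq, hne]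
  have hA1 : ((2*h).choose (h+1) : ℝ) * ((h:ℝ)+1) = ((2*h).choose h : ℝ) * (h:ℝ) := by
    have := Nat.choose_succ_right_eq (2*h) h
    have h2 : 2*h - h = h := by omega
    rw [h2] at this
    exact_mod_cast this
  have hA2 : ((2*h).choose (h+2) : ℝ) * ((h:ℝ)+2) = ((2*h).choose (h+1) : ℝ) * ((h:ℝ)-1) := by
    have := Nat.choose_succ_right_eq (2*h) (h+1)
    have h2 : 2*h - (h+1) = h-1 := by omega
    rw [h2] at this
    have := congrArg (Nat.cast (R := ℝ)) this
    push_cast [Nat.cast_sub (by omega : 1 ≤ h)] at this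
    convert this using 2 <;> push_cast <;> ring
  have hA3 : ((2*h).choose (h+3) : ℝ) * ((h:ℝ)+3) = ((2*h).choose (h+2) : ℝ) * ((h:ℝ)-2) := by
    have := Nat.choose_succ_right_eq (2*h) (h+2)
    have h2 : 2*h - (h+2) = h-2 := by omega
    rw [h2] at this
    have := congrArg (Nat.cast (R := ℝ)) this
    push_cast [Nat.cast_sub (by omega : 2 ≤ h)] at this
    convert this using 2 <;> push_cast <;> ring
  have hs1 : ((2*h+1).choose (h+1) : ℝ) * ((h:ℝ)+1) = (2*(h:ℝ)+1) * ((2*h).choose h : ℝ) := by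
    have := Nat.add_one_mul_choose_eq (2*h) h
    exact_mod_cast congrArg (Nat.cast (R := ℝ)) this.symm
  have hs2 : ((2*h+2).choose (h+2) : ℝ) * ((h:ℝ)+2) = (2*(h:ℝ)+2) * ((2*h+1).choose (h+1) : ℝ) := by
    have := Nat.add_one_mul_choose_eq (2*h+1) (h+1)
    exact_mod_cast congrArg (Nat.cast (R := ℝ)) this.symm
  have hs4 : (2*h+2).choose h = (2*h+2).choose (h+2) := by
    have h0 : (2*h+2).choose (2*h+2-(h+2)) = (2*h+2).choose (h+2) := Nat.choose_symm (by omega)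
    rw [show 2*h+2-(h+2) = h by omega] at h0
    exact h0
  have hs3 : ((2*h+3).choose (h+1) : ℝ) * ((h:ℝ)+1) = (2*(h:ℝ)+3) * ((2*h+2).choose (h+2) : ℝ) := by
    have := Nat.add_one_mul_choose_eq (2*h+2) h
    rw [hs4] at this
    exact_mod_cast congrArg (Nat.cast (R := ℝ)) this.symm
  -- closed forms
  have hp1 : (0:ℝ) < (h:ℝ)+1 := by positivity
  have hp2 : (0:ℝ) < (h:ℝ)+2 := by positivity
  have hp3 : (0:ℝ) < (h:ℝ)+3 := by positivity
  have e1 : ((2*h).choose (h+1) : ℝ) = ((2*h).choose h : ℝ) * (h:ℝ) / ((h:ℝ)+1) := by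
    rw [eq_div_iff (ne_of_gt hp1)]
    linarith [hA1]
  have e2 : ((2*h).choose (h+2) : ℝ)
      = ((2*h).choose h : ℝ) * (h:ℝ) * ((h:ℝ)-1) / (((h:ℝ)+1)*((h:ℝ)+2)) := by
    rw [eq_div_iff (by positivity)]
    linear_combination ((h:ℝ)+1)*hA2 + ((h:ℝ)-1)*hA1
  have e3 : ((2*h).choose (h+3) : ℝ)
      = ((2*h).choose h : ℝ) * (h:ℝ) * ((h:ℝ)-1) * ((h:ℝ)-2)
        / (((h:ℝ)+1)*((h:ℝ)+2)*((h:ℝ)+3)) := by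
    rw [eq_div_iff (by positivity)]
    linear_combination ((h:ℝ)+1)*((h:ℝ)+2)*hA3 + ((h:ℝ)-2)*(((h:ℝ)+1)*hA2 + ((h:ℝ)-1)*hA1)
  have e4 : ((2*h+3).choose (h+1) : ℝ)
      = ((2*h).choose h : ℝ) * ((2*(h:ℝ)+1)*(2*(h:ℝ)+2)*(2*(h:ℝ)+3))
        / (((h:ℝ)+1)*((h:ℝ)+1)*((h:ℝ)+2)) := by
    rw [eq_div_iff (by positivity)]
    linear_combination ((h:ℝ)+1)*((h:ℝ)+2)*hs3 + (2*(h:ℝ)+3)*((h:ℝ)+1)*hs2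
      + (2*(h:ℝ)+3)*(2*(h:ℝ)+2)*hs1
  -- final computation
  have hA0pos : (0:ℝ) < ((2*h).choose h : ℝ) := by
    exact_mod_cast Nat.choose_pos (by omega : h ≤ 2*h)
  have hnr : (n:ℝ) = 2*(h:ℝ)+3 := by exact_mod_cast congrArg (Nat.cast (R := ℝ)) hne
  have h2n : (0:ℝ) < 2^n := by positivity
  have htot : totalInf f
      = (((2*h).choose h : ℝ) * (11*(h:ℝ)+18) + ((2*h).choose (h+1) : ℝ) * (15*(h:ℝ)+29)
        + ((2*h).choose (h+2) : ℝ) * (5*(h:ℝ)+12) + ((2*h).choose (h+3) : ℝ) * ((h:ℝ)+3))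
        / 2^n := by
    rw [eq_div_iff (ne_of_gt h2n)]
    exact hform
  rw [htot, hchoose, e1, e2, e3, e4, hnr]
  have hb : ((2*h).choose h : ℝ) ≠ 0 := ne_of_gt hA0pos
  have hsub : (2*(h:ℝ)+3-2) = 2*(h:ℝ)+1 := by ring
  rw [hsub]
  have q1 : (2*(h:ℝ)+3) ≠ 0 := by positivity
  have q2 : (2*(h:ℝ)+1) ≠ 0 := by positivity
  have q3 : ((h:ℝ)+1) ≠ 0 := by positivity
  have q4 : ((h:ℝ)+2) ≠ 0 := by positivity
  have q5 : ((h:ℝ)+3) ≠ 0 := by positivity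
  have q6 : ((2:ℝ)^n) ≠ 0 := by positivity
  field_simp
  ring
end
end
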